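/- arXiv:1301.5276 — 10 statements merged into one kernel-verified Lean document; each statement's English description precedes it below -/
import Mathlib

section
/- The 5×5 skew-symmetric matrix Ψ_c(z) with entries Ψ_{12}=c₁z₄, Ψ_{13}=c₂z₂, Ψ_{14}=−c₂z₅, Ψ_{15}=−c₁z₃, Ψ_{23}=c₁z₅, Ψ_{24}=c₂z₃, Ψ_{25}=−c₂z₁, Ψ_{34}=c₁z₁, Ψ_{35}=c₂z₄, Ψ_{45}=c₁z₂ (and skew-symmetry) has its five principal 4×4 Pfaffians equal, up to sign, to the quintic-curve equations c₁c₂z₁² − c₁²z₂z₅ + c₂²z₃z₄, c₁c₂z₂² − c₁²z₁z₃ + c₂²z₄z₅, c₁c₂z₃² − c₁²z₂z₄ + c₂²z₁z₅, c₁c₂z₄² − c₁²z₃z₅ + c₂²z₁z₂, c₁c₂z₅² − c₁²z₁z₄ + c₂²z₂z₃. -/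
/-- The Pfaffian of the 4×4 skew-symmetric submatrix of `M` obtained by taking rows and
columns `a < b < c < d`. -/
def pf4 {R : Type*} [CommRing R] (M : Matrix (Fin 5) (Fin 5) R) (a b c d : Fin 5) : R :=
  M a b * M c d - M a c * M b d + M a d * M b c

/-- The five principal 4×4 Pfaffians of the matrix `Ψ_c(z)` are, up to sign, the five
equations of the elliptic normal quintic. -/
theorem stmt0 {R : Type*} [CommRing R] (c₁ c₂ z₁ z₂ z₃ z₄ z₅ : R) :
    let Ψ : Matrix (Fin 5) (Fin 5) R :=
      !![0, c₁*z₄, c₂*z₂, -(c₂*z₅), -(c₁*z₃);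
         -(c₁*z₄), 0, c₁*z₅, c₂*z₃, -(c₂*z₁);
         -(c₂*z₂), -(c₁*z₅), 0, c₁*z₁, c₂*z₄;
         c₂*z₅, -(c₂*z₃), -(c₁*z₁), 0, c₁*z₂;
         c₁*z₃, c₂*z₁, -(c₂*z₄), -(c₁*z₂), 0]
    let q₁ := c₁*c₂*z₁^2 - c₁^2*z₂*z₅ + c₂^2*z₃*z₄
    let q₂ := c₁*c₂*z₂^2 - c₁^2*z₁*z₃ + c₂^2*z₄*z₅
    let q₃ := c₁*c₂*z₃^2 - c₁^2*z₂*z₄ + c₂^2*z₁*z₅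
    let q₄ := c₁*c₂*z₄^2 - c₁^2*z₃*z₅ + c₂^2*z₁*z₂
    let q₅ := c₁*c₂*z₅^2 - c₁^2*z₁*z₄ + c₂^2*z₂*z₃
    (pf4 Ψ 1 2 3 4 = q₁ ∨ pf4 Ψ 1 2 3 4 = -q₁) ∧
    (pf4 Ψ 0 2 3 4 = q₂ ∨ pf4 Ψ 0 2 3 4 = -q₂) ∧
    (pf4 Ψ 0 1 3 4 = q₃ ∨ pf4 Ψ 0 1 3 4 = -q₃) ∧
    (pf4 Ψ 0 1 2 4 = q₄ ∨ pf4 Ψ 0 1 2 4 = -q₄) ∧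
    (pf4 Ψ 0 1 2 3 = q₅ ∨ pf4 Ψ 0 1 2 3 = -q₅) := by
  intro Ψ q₁ q₂ q₃ q₄ q₅
  refine ⟨?_, ?_, ?_, ?_, ?_⟩ <;>
    simp only [pf4, Ψ, q₁, q₂, q₃, q₄, q₅, Matrix.cons_val', Matrix.cons_val_zero,
      Matrix.cons_val_one, Matrix.head_cons, Matrix.empty_val', Matrix.cons_val_fin_one,
      Matrix.head_fin_const, Matrix.cons_val_two, Matrix.cons_val_three, Matrix.cons_val_four, Matrix.tail_cons, Matrix.of_apply, Fin.isValue] <;>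
    first
      | (left; ring1)
      | (right; ring1)
end

section
/- The vector v(1,2) = (z₁z₃²z₄ − z₂z₄z₅², z₁²z₄z₅ − z₂²z₃z₄, z₂³z₅ − z₁³z₃) satisfies the identity v(1,2)₁² + v(1,2)₂·v(1,2)₃ ≡ 0 modulo the ideal generated by the 3×3 minors of the matrix BHM(z). -/
set_option maxHeartbeats 1000000

open MvPolynomial

/-- In `K[z₁,…,z₅]`, with `v = v(1,2)` as in the paper, the element `v₁² + v₂·v₃` lies in
the ideal generated by the 3×3 minors of `BHM(z)`. -/
theorem stmt2 {K : Type*} [Field K] :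
    let z : Fin 5 → MvPolynomial (Fin 5) K := fun i => X i
    let BHM : Matrix (Fin 3) (Fin 5) (MvPolynomial (Fin 5) K) :=
      !![(z 0)^2, (z 1)^2, (z 2)^2, (z 3)^2, (z 4)^2;
         z 1*z 4, z 0*z 2, z 1*z 3, z 2*z 4, z 0*z 3;
         z 2*z 3, z 3*z 4, z 0*z 4, z 0*z 1, z 1*z 2]
    let v₁ := z 0*(z 2)^2*z 3 - z 1*z 3*(z 4)^2
    let v₂ := (z 0)^2*z 3*z 4 - (z 1)^2*z 2*z 3
    let v₃ := (z 1)^3*z 4 - (z 0)^3*z 2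
    v₁^2 + v₂*v₃ ∈
      Ideal.span {d : MvPolynomial (Fin 5) K |
        ∃ g : Fin 3 → Fin 5, d = (BHM.submatrix id g).det} := by
  intro z BHM v₁ v₂ v₃
  have h : v₁^2 + v₂*v₃ =
      (-(z 0 * z 3)) * (BHM.submatrix id ![0,1,2]).det
      + (z 1 * z 3) * (BHM.submatrix id ![0,1,4]).det := by
    show v₁^2 + v₂*v₃ = _
    simp only [BHM, v₁, v₂, v₃, Matrix.det_fin_three, Matrix.submatrix_apply, id_eq,
      Matrix.of_apply, Matrix.cons_val', Matrix.cons_val_zero, Matrix.cons_val_one,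
      Matrix.head_cons, Matrix.cons_val_fin_one, Matrix.empty_val', Matrix.head_fin_const,
      Matrix.cons_val_two, Matrix.tail_cons, Matrix.cons_val_three, Matrix.cons_val_four]
    ring
  rw [h]
  exact Ideal.add_mem _
    (Ideal.mul_mem_left _ _ (Ideal.subset_span ⟨![0,1,2], rfl⟩))
    (Ideal.mul_mem_left _ _ (Ideal.subset_span ⟨![0,1,4], rfl⟩))
end

section
/- If a point z lies on the line z₁ = 0, z₃ + ζz₄ = 0, ζ²z₂ + z₅ = 0 in P⁴, then the vector (−ζ z₂z₃, −ζ² z₃², z₂²) is a left null vector of the matrix BHM(z), and the point [0 : c₂ : −ζ⁴c₁ : ζ³c₁ : −ζ²c₂] with (c₁,c₂) = (−ζz₃, z₂) equals z; hence the map [c₁:c₂] ↦ [0 : c₂ : −ζ⁴c₁ : ζ³c₁ : −ζ²c₂] defines a section of the fibration of the Shioda surface S(5)₁₅ over P¹. -/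
/-- On the line `z₁ = 0, z₃ + ζz₄ = 0, ζ²z₂ + z₅ = 0`: (a) the vector
`(−ζz₂z₃, −ζ²z₃², z₂²)` is a left null vector of `BHM(z)`; (b) with
`(c₁,c₂) = (−ζz₃, z₂)` the point `[0 : c₂ : −ζ⁴c₁ : ζ³c₁ : −ζ²c₂]` equals `z` and
satisfies the five Pfaffian equations; hence `[c₁:c₂] ↦ [0 : c₂ : −ζ⁴c₁ : ζ³c₁ : −ζ²c₂]`
is a section of `S(5)₁₅ → P¹`. -/
theorem stmt5 {K : Type*} [Field K] (hchar : (5 : K) ≠ 0) (ζ : K)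
    (hζ : IsPrimitiveRoot ζ 5) (z₁ z₂ z₃ z₄ z₅ : K)
    (h1 : z₁ = 0) (h2 : z₃ + ζ*z₄ = 0) (h3 : ζ^2*z₂ + z₅ = 0) :
    let BHM : Matrix (Fin 3) (Fin 5) K :=
      !![z₁^2, z₂^2, z₃^2, z₄^2, z₅^2;
         z₂*z₅, z₁*z₃, z₂*z₄, z₃*z₅, z₁*z₄;
         z₃*z₄, z₄*z₅, z₁*z₅, z₁*z₂, z₂*z₃]
    let c₁ := -(ζ*z₃)
    let c₂ := z₂
    Matrix.vecMul ![-(ζ*z₂*z₃), -(ζ^2*z₃^2), z₂^2] BHM = 0 ∧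
    (![(0:K), c₂, -(ζ^4*c₁), ζ^3*c₁, -(ζ^2*c₂)] = ![z₁, z₂, z₃, z₄, z₅]) ∧
    (c₁*c₂*z₁^2 - c₁^2*z₂*z₅ + c₂^2*z₃*z₄ = 0 ∧
     c₁*c₂*z₂^2 - c₁^2*z₃*z₁ + c₂^2*z₄*z₅ = 0 ∧
     c₁*c₂*z₃^2 - c₁^2*z₄*z₂ + c₂^2*z₅*z₁ = 0 ∧
     c₁*c₂*z₄^2 - c₁^2*z₅*z₃ + c₂^2*z₁*z₂ = 0 ∧
     c₁*c₂*z₅^2 - c₁^2*z₁*z₄ + c₂^2*z₂*z₃ = 0) := by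
  have hζ5 : ζ^5 = 1 := hζ.pow_eq_one
  have p6 : ζ^6 = ζ := by rw [pow_succ, hζ5, one_mul]
  have p7 : ζ^7 = ζ^2 := by rw [pow_succ, p6]; ring
  have p8 : ζ^8 = ζ^3 := by rw [pow_succ, p7]; ring
  have hz3 : z₃ = -(ζ*z₄) := by linear_combination h2
  have hz5 : z₅ = -(ζ^2*z₂) := by linear_combination h3
  subst h1 hz3 hz5
  refine ⟨?_, ?_, ?_, ?_, ?_, ?_, ?_⟩
  · funext i
    fin_cases i <;>
      simp [Matrix.vecMul, dotProduct, Fin.sum_univ_succ] <;>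
      ring_nf <;> simp only [p6, p7, p8, hζ5] <;> ring
  · funext i
    fin_cases i <;> simp <;> ring_nf <;> simp only [p6, p7, p8, hζ5] <;> ring
  all_goals (ring_nf; try (simp only [p6, p7, p8, hζ5]; ring))
end

section
/- The five polynomials γ₁ = 3c₁c₂c₃c₄, γ₂ = −c₁(c₂³+c₃³+c₄³), γ₃ = c₂(c₁³+c₃³−c₄³), γ₄ = c₃(c₁³−c₂³+c₄³), γ₅ = c₄(c₁³+c₂³−c₃³) satisfy the Burkhardt quartic equation γ₁(γ₁³+γ₂³+γ₃³+γ₄³+γ₅³) + 3γ₂γ₃γ₄γ₅ = 0 identically in c₁,c₂,c₃,c₄. -/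
/-- The coefficients of the Coble cubic satisfy the Burkhardt quartic equation. -/
theorem stmt8 {K : Type*} [CommRing K] (c₁ c₂ c₃ c₄ : K) :
    let γ₁ := 3*c₁*c₂*c₃*c₄
    let γ₂ := -(c₁*(c₂^3+c₃^3+c₄^3))
    let γ₃ := c₂*(c₁^3+c₃^3-c₄^3)
    let γ₄ := c₃*(c₁^3-c₂^3+c₄^3)
    let γ₅ := c₄*(c₁^3+c₂^3-c₃^3)
    γ₁*(γ₁^3 + γ₂^3 + γ₃^3 + γ₄^3 + γ₅^3) + 3*γ₂*γ₃*γ₄*γ₅ = 0 := by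
  intros γ₁ γ₂ γ₃ γ₄ γ₅
  simp only [γ₁,γ₂,γ₃,γ₄,γ₅]
  ring
end

section
/- The linear span defined by the four equations (c₂³+c₃³+c₄³)z₁ + 3c₂c₃c₄(z₂+z₃) = 0, (−c₁³−c₃³+c₄³)z₁ + 3c₁c₃c₄(z₄+z₇) = 0, (−c₁³−c₂³+c₃³)z₁ + 3c₁c₂c₃(z₆+z₈) = 0, (−c₁³+c₂³−c₄³)z₁ + 3c₁c₂c₄(z₅+z₉) = 0 is contained in the kernel of the 9×9 matrix Φ_c(z_c), where z_c = (0,−c₁,c₁,−c₂,−c₃,−c₄,c₂,c₄,c₃); in particular any vector z satisfying these four linear equations satisfies Φ_c(z_c)·z = 0, assuming c₁c₂c₃c₄ ≠ 0. -/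
namespace StmtAux
open Matrix

lemma cons_val_five {α : Type*} {m : ℕ} (x : α) (u : Fin (m+5) → α) :
    vecCons x u 5 = vecHead (vecTail (vecTail (vecTail (vecTail u)))) := rfl

lemma cons_val_six {α : Type*} {m : ℕ} (x : α) (u : Fin (m+6) → α) :
    vecCons x u 6 = vecHead (vecTail (vecTail (vecTail (vecTail (vecTail u))))) := rfl

lemma cons_val_seven {α : Type*} {m : ℕ} (x : α) (u : Fin (m+7) → α) :
    vecCons x u 7 =
      vecHead (vecTail (vecTail (vecTail (vecTail (vecTail (vecTail u)))))) := rfl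

lemma cons_val_eight {α : Type*} {m : ℕ} (x : α) (u : Fin (m+8) → α) :
    vecCons x u 8 =
      vecHead (vecTail (vecTail (vecTail (vecTail (vecTail (vecTail (vecTail u))))))) := rfl

end StmtAux

/-- Any vector satisfying the four linear equations (3.8) lies in the kernel of the
matrix `Φ_c(z_c)` of (3.7), assuming `c₁c₂c₃c₄ ≠ 0`. -/
theorem stmt10 {K : Type*} [Field K] (h2 : (2 : K) ≠ 0) (h3 : (3 : K) ≠ 0)
    (c₁ c₂ c₃ c₄ : K) (hc : c₁*c₂*c₃*c₄ ≠ 0)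
    (z₁ z₂ z₃ z₄ z₅ z₆ z₇ z₈ z₉ : K)
    (L₁ : (c₂^3+c₃^3+c₄^3)*z₁ + 3*c₂*c₃*c₄*(z₂+z₃) = 0)
    (L₂ : (-c₁^3-c₃^3+c₄^3)*z₁ + 3*c₁*c₃*c₄*(z₄+z₇) = 0)
    (L₃ : (-c₁^3-c₂^3+c₃^3)*z₁ + 3*c₁*c₂*c₃*(z₆+z₈) = 0)
    (L₄ : (-c₁^3+c₂^3-c₄^3)*z₁ + 3*c₁*c₂*c₄*(z₅+z₉) = 0) :
    let M : Matrix (Fin 9) (Fin 9) K :=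
      !![0, -c₁^2, -c₁^2, -c₂^2, -c₃^2, -c₄^2, -c₂^2, -c₄^2, -c₃^2;
         c₁^2, 0, 0, -(c₃*c₄), -(c₂*c₄), -(c₂*c₃), -(c₃*c₄), -(c₂*c₃), -(c₂*c₄);
         c₁^2, 0, 0, -(c₃*c₄), -(c₂*c₄), -(c₂*c₃), -(c₃*c₄), -(c₂*c₃), -(c₂*c₄);
         c₂^2, c₃*c₄, c₃*c₄, 0, c₁*c₄, -(c₁*c₃), 0, -(c₁*c₃), c₁*c₄;
         c₃^2, c₂*c₄, c₂*c₄, -(c₁*c₄), 0, c₁*c₂, -(c₁*c₄), c₁*c₂, 0;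
         c₄^2, c₂*c₃, c₂*c₃, c₁*c₃, -(c₁*c₂), 0, c₁*c₃, 0, -(c₁*c₂);
         c₂^2, c₃*c₄, c₃*c₄, 0, c₁*c₄, -(c₁*c₃), 0, -(c₁*c₃), c₁*c₄;
         c₄^2, c₂*c₃, c₂*c₃, c₁*c₃, -(c₁*c₂), 0, c₁*c₃, 0, -(c₁*c₂);
         c₃^2, c₂*c₄, c₂*c₄, -(c₁*c₄), 0, c₁*c₂, -(c₁*c₄), c₁*c₂, 0]
    M.mulVec ![z₁, z₂, z₃, z₄, z₅, z₆, z₇, z₈, z₉] = 0 := by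
  intro M
  have h9 : (3*c₁*c₂*c₃*c₄ : K) ≠ 0 := by
    have h := mul_ne_zero h3 hc
    intro he; exact h (by linear_combination he)
  funext i
  fin_cases i <;>
    simp [M, Matrix.mulVec, dotProduct, Fin.sum_univ_succ, Matrix.vecHead, Matrix.vecTail,
      StmtAux.cons_val_five, StmtAux.cons_val_six, StmtAux.cons_val_seven, StmtAux.cons_val_eight] <;>
    refine mul_left_cancel₀ h9 ?_ <;> rw [mul_zero]
  · linear_combination (-c₁^3)*L₁ + (-c₂^3)*L₂ + (-c₄^3)*L₃ + (-c₃^3)*L₄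
  · linear_combination (-c₂*c₃*c₄)*L₂ + (-c₂*c₃*c₄)*L₃ + (-c₂*c₃*c₄)*L₄
  · linear_combination (-c₂*c₃*c₄)*L₂ + (-c₂*c₃*c₄)*L₃ + (-c₂*c₃*c₄)*L₄
  · linear_combination (c₁*c₃*c₄)*L₁ + (-c₁*c₃*c₄)*L₃ + (c₁*c₃*c₄)*L₄
  · linear_combination (c₁*c₂*c₄)*L₁ + (-c₁*c₂*c₄)*L₂ + (c₁*c₂*c₄)*L₃
  · linear_combination (c₁*c₂*c₃)*L₁ + (c₁*c₂*c₃)*L₂ + (-c₁*c₂*c₃)*L₄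
  · linear_combination (c₁*c₃*c₄)*L₁ + (-c₁*c₃*c₄)*L₃ + (c₁*c₃*c₄)*L₄
  · linear_combination (c₁*c₂*c₃)*L₁ + (c₁*c₂*c₃)*L₂ + (-c₁*c₂*c₃)*L₄
  · linear_combination (c₁*c₂*c₄)*L₁ + (-c₁*c₂*c₄)*L₂ + (c₁*c₂*c₄)*L₃
end

section
/- The five principal 4×4 Pfaffians of the 5×5 skew-symmetric matrix ψ(c) (with ψ₁₂ = c₁², ψ₁₃ = c₂², ψ₁₄ = c₃², ψ₁₅ = c₄², ψ₂₃ = c₃c₄, ψ₂₄ = c₂c₄, ψ₂₅ = c₂c₃, ψ₃₄ = −c₁c₄, ψ₃₅ = c₁c₃, ψ₄₅ = −c₁c₂) generate the same ideal as the five coefficients of the Coble cubic: 3c₁c₂c₃c₄, c₁(c₂³+c₃³+c₄³), c₂(c₁³+c₃³−c₄³), c₃(c₁³−c₂³+c₄³), c₄(c₁³+c₂³−c₃³), in K[c₁,…,c₄] with char K ≠ 3; in particular each Pfaffian equals one of the coefficients up to sign. -/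
open MvPolynomial

/-- The five principal 4×4 Pfaffians of `ψ(c)` generate the same ideal as the five
coefficients of the Coble cubic, and each Pfaffian equals one of the coefficients up to
sign. -/
theorem stmt13 {K : Type*} [Field K] (h3 : (3 : K) ≠ 0) :
    let c : Fin 4 → MvPolynomial (Fin 4) K := fun i => X i
    let ψ : Matrix (Fin 5) (Fin 5) (MvPolynomial (Fin 4) K) :=
      !![0, (c 0)^2, (c 1)^2, (c 2)^2, (c 3)^2;
         -(c 0)^2, 0, c 2*c 3, c 1*c 3, c 1*c 2;
         -(c 1)^2, -(c 2*c 3), 0, -(c 0*c 3), c 0*c 2;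
         -(c 2)^2, -(c 1*c 3), c 0*c 3, 0, -(c 0*c 1);
         -(c 3)^2, -(c 1*c 2), -(c 0*c 2), c 0*c 1, 0]
    let pf : Fin 5 → MvPolynomial (Fin 4) K :=
      ![ψ 1 2 * ψ 3 4 - ψ 1 3 * ψ 2 4 + ψ 1 4 * ψ 2 3,
        ψ 0 2 * ψ 3 4 - ψ 0 3 * ψ 2 4 + ψ 0 4 * ψ 2 3,
        ψ 0 1 * ψ 3 4 - ψ 0 3 * ψ 1 4 + ψ 0 4 * ψ 1 3,
        ψ 0 1 * ψ 2 4 - ψ 0 2 * ψ 1 4 + ψ 0 4 * ψ 1 2,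
        ψ 0 1 * ψ 2 3 - ψ 0 2 * ψ 1 3 + ψ 0 3 * ψ 1 2]
    let γ : Fin 5 → MvPolynomial (Fin 4) K :=
      ![3*(c 0*c 1*c 2*c 3), c 0*((c 1)^3+(c 2)^3+(c 3)^3),
        c 1*((c 0)^3+(c 2)^3-(c 3)^3), c 2*((c 0)^3-(c 1)^3+(c 3)^3),
        c 3*((c 0)^3+(c 1)^3-(c 2)^3)]
    Ideal.span (Set.range pf) = Ideal.span (Set.range γ) ∧
    ∀ i : Fin 5, ∃ j : Fin 5, pf i = γ j ∨ pf i = -γ j := by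
  intro c ψ pf γ
  have e0 : pf 0 = -γ 0 := by simp only [pf, γ, ψ, c]; simp [Fin.isValue]; ring
  have e1 : pf 1 = -γ 1 := by simp only [pf, γ, ψ, c]; simp [Fin.isValue]; ring
  have e2 : pf 2 = -γ 2 := by simp only [pf, γ, ψ, c]; simp [Fin.isValue]; ring
  have e3 : pf 3 = γ 3 := by simp only [pf, γ, ψ, c]; simp [Fin.isValue]; ring
  have e4 : pf 4 = -γ 4 := by simp only [pf, γ, ψ, c]; simp [Fin.isValue]; ring
  constructor
  · apply le_antisymm <;> rw [Ideal.span_le] <;> rintro x ⟨i, rfl⟩ <;> fin_cases i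
    · show pf 0 ∈ Ideal.span (Set.range γ); rw [e0]; exact neg_mem (Ideal.subset_span ⟨0, rfl⟩)
    · show pf 1 ∈ Ideal.span (Set.range γ); rw [e1]; exact neg_mem (Ideal.subset_span ⟨1, rfl⟩)
    · show pf 2 ∈ Ideal.span (Set.range γ); rw [e2]; exact neg_mem (Ideal.subset_span ⟨2, rfl⟩)
    · show pf 3 ∈ Ideal.span (Set.range γ); rw [e3]; exact Ideal.subset_span ⟨3, rfl⟩
    · show pf 4 ∈ Ideal.span (Set.range γ); rw [e4]; exact neg_mem (Ideal.subset_span ⟨4, rfl⟩)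
    · show γ 0 ∈ Ideal.span (Set.range pf)
      rw [show γ 0 = -pf 0 by rw [e0, neg_neg]]; exact neg_mem (Ideal.subset_span ⟨0, rfl⟩)
    · show γ 1 ∈ Ideal.span (Set.range pf)
      rw [show γ 1 = -pf 1 by rw [e1, neg_neg]]; exact neg_mem (Ideal.subset_span ⟨1, rfl⟩)
    · show γ 2 ∈ Ideal.span (Set.range pf)
      rw [show γ 2 = -pf 2 by rw [e2, neg_neg]]; exact neg_mem (Ideal.subset_span ⟨2, rfl⟩)
    · show γ 3 ∈ Ideal.span (Set.range pf); rw [← e3]; exact Ideal.subset_span ⟨3, rfl⟩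
    · show γ 4 ∈ Ideal.span (Set.range pf)
      rw [show γ 4 = -pf 4 by rw [e4, neg_neg]]; exact neg_mem (Ideal.subset_span ⟨4, rfl⟩)
  · intro i
    fin_cases i
    · exact ⟨0, Or.inr e0⟩
    · exact ⟨1, Or.inr e1⟩
    · exact ⟨2, Or.inr e2⟩
    · exact ⟨3, Or.inl e3⟩
    · exact ⟨4, Or.inr e4⟩
end

section
/- Let K be a field of characteristic ≠ 3. The plane cubic λ(x³+y³+z³) + μ·xyz = 0 over K is smooth (i.e., the common vanishing locus in K³∖{0} of the three partial derivatives 3λx² + μyz, 3λy² + μxz, 3λz² + μxy is empty) if and only if λ(μ³ + 27λ³) ≠ 0, provided K is algebraically closed. -/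
/-- Over an algebraically closed field of characteristic ≠ 3, the Hesse cubic
`λ(x³+y³+z³) + μxyz` is smooth iff `λ(μ³+27λ³) ≠ 0`. -/
theorem stmt15 {K : Type*} [Field K] [IsAlgClosed K] (h3 : (3 : K) ≠ 0) (l m : K) :
    (∀ x y z : K, (x, y, z) ≠ (0, 0, 0) →
      ¬(l*(x^3+y^3+z^3) + m*(x*y*z) = 0 ∧ 3*l*x^2 + m*(y*z) = 0 ∧
        3*l*y^2 + m*(x*z) = 0 ∧ 3*l*z^2 + m*(x*y) = 0)) ↔
    l*(m^3 + 27*l^3) ≠ 0 := by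
  have h3' : (3 : K) ≠ 0 := h3
  constructor
  · intro hs hz
    by_cases hl : l = 0
    · exact hs 1 0 0 (by simp) ⟨by rw [hl]; ring, by rw [hl]; ring, by rw [hl]; ring,
        by rw [hl]; ring⟩
    · have hm : m ^ 3 + 27 * l ^ 3 = 0 := (mul_eq_zero.1 hz).resolve_left hl
      have h3l : (3 : K) * l ≠ 0 := mul_ne_zero h3 hl
      set w := -m / (3 * l) with hw
      have hmw : m = -(3 * l * w) := by rw [hw]; field_simp
      have hw3 : w ^ 3 = 1 := by
        rw [hw]
        field_simp
        linear_combination -hm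
      exact hs 1 w w (by simp) ⟨by linear_combination (-l) * hw3 + w ^ 2 * hmw,
        by linear_combination (-(3 * l)) * hw3 + w ^ 2 * hmw,
        by linear_combination w * hmw, by linear_combination w * hmw⟩
  · intro hne x y z hxyz hall
    obtain ⟨e0, e1, e2, e3⟩ := hall
    have hl : l ≠ 0 := fun h => hne (by rw [h]; ring)
    have hm : m ^ 3 + 27 * l ^ 3 ≠ 0 := fun h => hne (by rw [mul_comm, h]; ring)
    have h3l : (3 : K) * l ≠ 0 := mul_ne_zero h3 hl
    have key : (m ^ 3 + 27 * l ^ 3) * (x * y * z) ^ 2 = 0 := by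
      linear_combination ((3*l*y^2 + m*(x*z)) * (3*l*z^2 + m*(x*y))
          - 3*l*z^2 * (3*l*y^2 + m*(x*z)) - 3*l*y^2 * (3*l*z^2 + m*(x*y))
          + 9*l^2*y^2*z^2) * e1
        + (-(3*l*x^2) * (3*l*z^2 + m*(x*y)) + 9*l^2*x^2*z^2) * e2
        + (9*l^2*x^2*y^2) * e3
    have hxyz0 : x * y * z = 0 := by
      have := (mul_eq_zero.1 key).resolve_left hm
      exact pow_eq_zero_iff (by norm_num) |>.1 this
    have zero_of : ∀ a : K, (3 * l) * a ^ 2 = 0 → a = 0 := by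
      intro a ha
      exact sq_eq_zero_iff.1 ((mul_eq_zero.1 ha).resolve_left h3l)
    rcases mul_eq_zero.1 hxyz0 with hxy | hz0
    · rcases mul_eq_zero.1 hxy with hx0 | hy0
      · have hy : y = 0 := zero_of y (by linear_combination e2 - m * z * hx0)
        have hz' : z = 0 := zero_of z (by linear_combination e3 - m * y * hx0)
        exact hxyz (by rw [hx0, hy, hz'])
      · have hx : x = 0 := zero_of x (by linear_combination e1 - m * z * hy0)
        have hz' : z = 0 := zero_of z (by linear_combination e3 - m * x * hy0)
        exact hxyz (by rw [hx, hy0, hz'])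
    · have hx : x = 0 := zero_of x (by linear_combination e1 - m * y * hz0)
      have hy : y = 0 := zero_of y (by linear_combination e2 - m * x * hz0)
      exact hxyz (by rw [hx, hy, hz0])
end

section
/- For the three quadrics q₁ = c₁²z₃z₉ − c₂²z₄z₅, q₂ = c₁²z₂z₅ − c₂²z₇z₉, q₃ = c₁²z₄z₇ − c₂²z₂z₃ over a field K with c₁c₂(c₁⁶ − c₂⁶) ≠ 0, there exists a point in their common zero locus at which the Jacobian matrix of (q₁,q₂,q₃) with respect to (z₂,z₃,z₄,z₅,z₇,z₉) has rank 3; hence q₁,q₂,q₃ form a regular sequence in K[z₂,z₃,z₄,z₅,z₇,z₉]. -/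
open MvPolynomial

namespace Stmt16

variable {K : Type*} [Field K]
/-- Substitute 0 for variable `i`. -/
noncomputable def ee (i : Fin 6) :
    MvPolynomial (Fin 6) K →ₐ[K] MvPolynomial (Fin 6) K :=
  aeval (Function.update X i 0)

@[simp] lemma ee_X (i j : Fin 6) : ee (K := K) i (X j) = if j = i then 0 else X j := by
  simp only [ee, aeval_X, Function.update]
  split <;> simp_all

@[simp] lemma ee_C (i : Fin 6) (a : K) : ee i (C a) = C a := by
  simp [ee]

lemma sub_ee_mem (i : Fin 6) (F : MvPolynomial (Fin 6) K) :
    F - ee i F ∈ Ideal.span {X i} := by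
  induction F using MvPolynomial.induction_on with
  | C a => simp
  | add p q hp hq =>
      have : p + q - ee i (p + q) = (p - ee i p) + (q - ee i q) := by
        rw [map_add]; ring
      rw [this]; exact add_mem hp hq
  | mul_X p j hp =>
      rw [map_mul, ee_X]
      split_ifs with hj
      · rw [mul_zero, sub_zero, hj]
        exact Ideal.mul_mem_left _ _ (Ideal.subset_span (Set.mem_singleton _))
      · have : p * X j - ee i p * X j = (p - ee i p) * X j := by ring
        rw [this]; exact Ideal.mul_mem_right _ _ hp

lemma mem_span_X_of_ee_eq_zero {i : Fin 6} {F : MvPolynomial (Fin 6) K}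
    (h : ee i F = 0) : F ∈ Ideal.span {X i} := by
  have := sub_ee_mem i F
  rwa [h, sub_zero] at this

lemma eval_congr_supported {s : Set (Fin 6)} {G : MvPolynomial (Fin 6) K}
    (hG : G ∈ supported K s) (x y : Fin 6 → K) (h : ∀ j ∈ s, x j = y j) :
    eval x G = eval y G := by
  induction hG using Algebra.adjoin_induction with
  | mem p hp => obtain ⟨j, hj, rfl⟩ := hp; simp [h j hj]
  | algebraMap r => simp
  | add p q _ _ hp hq => simp [hp, hq]
  | mul p q _ _ hp hq => simp [hp, hq]

lemma smul_reg_helper {R : Type*} [CommRing R] {I : Ideal R} {r : R}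
    (h : ∀ f, r * f ∈ I → f ∈ I) :
    IsSMulRegular (R ⧸ (I • (⊤ : Submodule R R))) r := by
  have hI : (I • (⊤ : Submodule R R)) = I := by
    rw [smul_eq_mul, Ideal.mul_top]
  intro x y hxy
  obtain ⟨f, rfl⟩ := Submodule.Quotient.mk_surjective _ x
  obtain ⟨g, rfl⟩ := Submodule.Quotient.mk_surjective _ y
  simp only at hxy
  rw [← Submodule.Quotient.mk_smul, ← Submodule.Quotient.mk_smul] at hxy
  rw [Submodule.Quotient.eq, hI] at hxy ⊢
  have : r * (f - g) ∈ I := by rw [mul_sub]; simpa [smul_eq_mul] using hxy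
  exact h _ this

variable (c₁ c₂ : K)

noncomputable def Q1 : MvPolynomial (Fin 6) K := C (c₁^2) * X 1 * X 5 - C (c₂^2) * X 2 * X 3
noncomputable def Q2 : MvPolynomial (Fin 6) K := C (c₁^2) * X 0 * X 3 - C (c₂^2) * X 4 * X 5
noncomputable def Q3 : MvPolynomial (Fin 6) K := C (c₁^2) * X 2 * X 4 - C (c₂^2) * X 0 * X 1
noncomputable def Gg : MvPolynomial (Fin 6) K := C (c₁^4) * X 0 * X 1 - C (c₂^4) * X 2 * X 4

variable {c₁ c₂}

lemma Q1_ne_zero (h1 : c₁ ≠ 0) : Q1 (K := K) c₁ c₂ ≠ 0 := by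
  intro h
  have := congrArg (eval (![0,1,0,0,0,1] : Fin 6 → K)) h
  simp only [Q1, eval_sub, eval_mul, eval_C, eval_X, eval_zero] at this
  rw [show (![0,1,0,0,0,1] : Fin 6 → K) 1 = 1 from rfl,
    show (![0,1,0,0,0,1] : Fin 6 → K) 5 = 1 from rfl,
    show (![0,1,0,0,0,1] : Fin 6 → K) 2 = 0 from rfl] at this
  simp at this
  exact h1 this

lemma Q2_ne_zero (h1 : c₁ ≠ 0) : Q2 (K := K) c₁ c₂ ≠ 0 := by
  intro h
  have := congrArg (eval (![1,0,0,1,0,0] : Fin 6 → K)) h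
  simp only [Q2, eval_sub, eval_mul, eval_C, eval_X, eval_zero] at this
  rw [show (![1,0,0,1,0,0] : Fin 6 → K) 0 = 1 from rfl,
    show (![1,0,0,1,0,0] : Fin 6 → K) 3 = 1 from rfl,
    show (![1,0,0,1,0,0] : Fin 6 → K) 4 = 0 from rfl] at this
  simp at this
  exact h1 this

lemma Q3_ne_zero (h1 : c₁ ≠ 0) : Q3 (K := K) c₁ c₂ ≠ 0 := by
  intro h
  have := congrArg (eval (![0,0,1,0,1,0] : Fin 6 → K)) h
  simp only [Q3, eval_sub, eval_mul, eval_C, eval_X, eval_zero] at this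
  rw [show (![0,0,1,0,1,0] : Fin 6 → K) 2 = 1 from rfl,
    show (![0,0,1,0,1,0] : Fin 6 → K) 4 = 1 from rfl,
    show (![0,0,1,0,1,0] : Fin 6 → K) 0 = 0 from rfl] at this
  simp at this
  exact h1 this

lemma Gg_ne_zero (h1 : c₁ ≠ 0) : Gg (K := K) c₁ c₂ ≠ 0 := by
  intro h
  have := congrArg (eval (![1,1,0,0,0,0] : Fin 6 → K)) h
  simp only [Gg, eval_sub, eval_mul, eval_C, eval_X, eval_zero] at this
  rw [show (![1,1,0,0,0,0] : Fin 6 → K) 0 = 1 from rfl,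
    show (![1,1,0,0,0,0] : Fin 6 → K) 1 = 1 from rfl,
    show (![1,1,0,0,0,0] : Fin 6 → K) 2 = 0 from rfl] at this
  simp at this
  exact h1 this


lemma C_mem_supported (a : K) (s : Set (Fin 6)) : C a ∈ supported K s := by
  rw [show (C a : MvPolynomial (Fin 6) K) = algebraMap K _ a from rfl]
  exact Subalgebra.algebraMap_mem _ _

lemma clearing2 (F : MvPolynomial (Fin 6) K) :
    ∃ (N M : ℕ) (G : MvPolynomial (Fin 6) K),
      G ∈ supported K ({2,3,4,5} : Set (Fin 6)) ∧
      (C (c₁^2) * X 3)^N * ((C (c₁^2) * X 5)^M * F) - G ∈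
        Ideal.span {Q1 c₁ c₂, Q2 c₁ c₂} := by
  induction F using MvPolynomial.induction_on with
  | C a =>
      exact ⟨0, 0, C a, C_mem_supported a _, by simp⟩
  | add p q hp hq =>
      obtain ⟨N1, M1, G1, s1, m1⟩ := hp
      obtain ⟨N2, M2, G2, s2, m2⟩ := hq
      have he3 : (C (c₁^2) * X 3 : MvPolynomial (Fin 6) K) ∈ supported K ({2,3,4,5} : Set (Fin 6)) :=
        mul_mem (C_mem_supported _ _) (X_mem_supported.mpr (by norm_num))
      have he5 : (C (c₁^2) * X 5 : MvPolynomial (Fin 6) K) ∈ supported K ({2,3,4,5} : Set (Fin 6)) :=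
        mul_mem (C_mem_supported _ _) (X_mem_supported.mpr (by norm_num))
      refine ⟨N1+N2, M1+M2,
        (C (c₁^2) * X 3)^N2 * (C (c₁^2) * X 5)^M2 * G1
          + (C (c₁^2) * X 3)^N1 * (C (c₁^2) * X 5)^M1 * G2,
        add_mem (mul_mem (mul_mem (pow_mem he3 _) (pow_mem he5 _)) s1)
          (mul_mem (mul_mem (pow_mem he3 _) (pow_mem he5 _)) s2), ?_⟩
      have key : (C (c₁^2) * X 3)^(N1+N2) * ((C (c₁^2) * X 5)^(M1+M2) * (p + q))
          - ((C (c₁^2) * X 3)^N2 * (C (c₁^2) * X 5)^M2 * G1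
            + (C (c₁^2) * X 3)^N1 * (C (c₁^2) * X 5)^M1 * G2)
          = (C (c₁^2) * X 3)^N2 * (C (c₁^2) * X 5)^M2
              * ((C (c₁^2) * X 3)^N1 * ((C (c₁^2) * X 5)^M1 * p) - G1)
            + (C (c₁^2) * X 3)^N1 * (C (c₁^2) * X 5)^M1
              * ((C (c₁^2) * X 3)^N2 * ((C (c₁^2) * X 5)^M2 * q) - G2) := by
        ring
      rw [key]
      exact add_mem (Ideal.mul_mem_left _ _ m1) (Ideal.mul_mem_left _ _ m2)
  | mul_X p j hp =>
      obtain ⟨N, M, G, hs, hm⟩ := hp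
      have hj : j = 0 ∨ j = 1 ∨ j ∈ ({2,3,4,5} : Set (Fin 6)) := by fin_cases j <;> simp
      rcases hj with rfl | rfl | hj
      · refine ⟨N+1, M, C (c₂^2) * X 4 * X 5 * G,
          mul_mem (mul_mem (mul_mem (C_mem_supported _ _) (X_mem_supported.mpr (by norm_num)))
            (X_mem_supported.mpr (by norm_num))) hs, ?_⟩
        have key : (C (c₁^2) * X 3)^(N+1) * ((C (c₁^2) * X 5)^M * (p * X 0))
            - C (c₂^2) * X 4 * X 5 * G
            = ((C (c₁^2) * X 3)^N * ((C (c₁^2) * X 5)^M * p)) * Q2 c₁ c₂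
              + (C (c₂^2) * X 4 * X 5)
                * ((C (c₁^2) * X 3)^N * ((C (c₁^2) * X 5)^M * p) - G) := by
          simp only [Q2]; ring
        rw [key]
        exact add_mem (Ideal.mul_mem_left _ _
            (Ideal.subset_span (Set.mem_insert_of_mem _ rfl)))
          (Ideal.mul_mem_left _ _ hm)
      · refine ⟨N, M+1, C (c₂^2) * X 2 * X 3 * G,
          mul_mem (mul_mem (mul_mem (C_mem_supported _ _) (X_mem_supported.mpr (by norm_num)))
            (X_mem_supported.mpr (by norm_num))) hs, ?_⟩
        have key : (C (c₁^2) * X 3)^N * ((C (c₁^2) * X 5)^(M+1) * (p * X 1))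
            - C (c₂^2) * X 2 * X 3 * G
            = ((C (c₁^2) * X 3)^N * ((C (c₁^2) * X 5)^M * p)) * Q1 c₁ c₂
              + (C (c₂^2) * X 2 * X 3)
                * ((C (c₁^2) * X 3)^N * ((C (c₁^2) * X 5)^M * p) - G) := by
          simp only [Q1]; ring
        rw [key]
        exact add_mem (Ideal.mul_mem_left _ _ (Ideal.subset_span (Set.mem_insert _ _)))
          (Ideal.mul_mem_left _ _ hm)
      ·
        refine ⟨N, M, G * X j, mul_mem hs (X_mem_supported.mpr hj), ?_⟩
        have key : ∀ j : Fin 6, (C (c₁^2) * X 3)^N * ((C (c₁^2) * X 5)^M * (p * X j)) - G * X j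
            = ((C (c₁^2) * X 3)^N * ((C (c₁^2) * X 5)^M * p) - G) * X j := by
          intro j; ring
        rw [key]
        exact Ideal.mul_mem_right _ _ hm


lemma clearing1 (F : MvPolynomial (Fin 6) K) :
    ∃ (M : ℕ) (G : MvPolynomial (Fin 6) K),
      G ∈ supported K ({0,2,3,4,5} : Set (Fin 6)) ∧
      (C (c₁^2) * X 5)^M * F - G ∈ Ideal.span {Q1 c₁ c₂} := by
  induction F using MvPolynomial.induction_on with
  | C a => exact ⟨0, C a, C_mem_supported a _, by simp⟩
  | add p q hp hq =>
      obtain ⟨M1, G1, s1, m1⟩ := hp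
      obtain ⟨M2, G2, s2, m2⟩ := hq
      have he5 : (C (c₁^2) * X 5 : MvPolynomial (Fin 6) K) ∈ supported K ({0,2,3,4,5} : Set (Fin 6)) :=
        mul_mem (C_mem_supported _ _) (X_mem_supported.mpr (by norm_num))
      refine ⟨M1+M2, (C (c₁^2) * X 5)^M2 * G1 + (C (c₁^2) * X 5)^M1 * G2,
        add_mem (mul_mem (pow_mem he5 _) s1) (mul_mem (pow_mem he5 _) s2), ?_⟩
      have key : (C (c₁^2) * X 5)^(M1+M2) * (p + q)
          - ((C (c₁^2) * X 5)^M2 * G1 + (C (c₁^2) * X 5)^M1 * G2)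
          = (C (c₁^2) * X 5)^M2 * ((C (c₁^2) * X 5)^M1 * p - G1)
            + (C (c₁^2) * X 5)^M1 * ((C (c₁^2) * X 5)^M2 * q - G2) := by ring
      rw [key]
      exact add_mem (Ideal.mul_mem_left _ _ m1) (Ideal.mul_mem_left _ _ m2)
  | mul_X p j hp =>
      obtain ⟨M, G, hs, hm⟩ := hp
      have hj : j = 1 ∨ j ∈ ({0,2,3,4,5} : Set (Fin 6)) := by fin_cases j <;> simp
      rcases hj with rfl | hj
      · refine ⟨M+1, C (c₂^2) * X 2 * X 3 * G,
          mul_mem (mul_mem (mul_mem (C_mem_supported _ _) (X_mem_supported.mpr (by norm_num)))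
            (X_mem_supported.mpr (by norm_num))) hs, ?_⟩
        have key : (C (c₁^2) * X 5)^(M+1) * (p * X 1) - C (c₂^2) * X 2 * X 3 * G
            = ((C (c₁^2) * X 5)^M * p) * Q1 c₁ c₂
              + (C (c₂^2) * X 2 * X 3) * ((C (c₁^2) * X 5)^M * p - G) := by
          simp only [Q1]; ring
        rw [key]
        exact add_mem (Ideal.mul_mem_left _ _ (Ideal.subset_span rfl))
          (Ideal.mul_mem_left _ _ hm)
      · refine ⟨M, G * X j, mul_mem hs (X_mem_supported.mpr hj), ?_⟩
        have key : (C (c₁^2) * X 5)^M * (p * X j) - G * X j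
            = ((C (c₁^2) * X 5)^M * p - G) * X j := by ring
        rw [key]
        exact Ideal.mul_mem_right _ _ hm

lemma strip5 (h2 : c₂ ≠ 0) (F : MvPolynomial (Fin 6) K)
    (h : (C (c₁^2) * X 5) * F ∈ Ideal.span {Q1 c₁ c₂}) (h1 : c₁ ≠ 0) :
    F ∈ Ideal.span {Q1 c₁ c₂} := by
  rw [Ideal.mem_span_singleton'] at h
  obtain ⟨a, ha⟩ := h
  have ha0 : ee 5 a = 0 := by
    have h := congrArg (ee 5) ha
    rw [map_mul, show ee (K:=K) 5 (Q1 c₁ c₂) = -(C (c₂^2) * X 2 * X 3) from by simp [Q1],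
      map_mul, map_mul] at h
    simp only [ee_X, ee_C] at h
    norm_num at h
    rcases h with h | h
    · exact h
    · exact absurd h h2
  obtain ⟨b, hb⟩ := Ideal.mem_span_singleton'.mp (mem_span_X_of_ee_eq_zero ha0)
  have hcan : X 5 * (b * Q1 c₁ c₂) = X 5 * (C (c₁^2) * F) := by
    rw [← hb] at ha; linear_combination ha
  have hb2 : b * Q1 c₁ c₂ = C (c₁^2) * F := mul_left_cancel₀ (X_ne_zero 5) hcan
  rw [Ideal.mem_span_singleton']
  refine ⟨C ((c₁^2)⁻¹) * b, ?_⟩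
  have : C ((c₁^2)⁻¹ : K) * (b * Q1 c₁ c₂) = C ((c₁^2)⁻¹) * (C (c₁^2) * F) := by rw [hb2]
  calc C ((c₁^2)⁻¹ : K) * b * Q1 c₁ c₂ = C ((c₁^2)⁻¹) * (C (c₁^2) * F) := by
        rw [← this]; ring
    _ = F := by
        rw [← mul_assoc, ← C_mul, inv_mul_cancel₀ (pow_ne_zero 2 h1), C_1, one_mul]


lemma strip5_pow (h1 : c₁ ≠ 0) (h2 : c₂ ≠ 0) :
    ∀ (M : ℕ) (F : MvPolynomial (Fin 6) K),
      (C (c₁^2) * X 5)^M * F ∈ Ideal.span {Q1 c₁ c₂} → F ∈ Ideal.span {Q1 c₁ c₂} := by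
  intro M
  induction M with
  | zero => intro F h; simpa using h
  | succ M ih =>
      intro F h
      rw [pow_succ, mul_assoc] at h
      exact strip5 h2 F (ih _ h) h1

lemma reg2 [Infinite K] (h1 : c₁ ≠ 0) (h2 : c₂ ≠ 0) (F : MvPolynomial (Fin 6) K)
    (hF : Q2 c₁ c₂ * F ∈ Ideal.span {Q1 c₁ c₂}) : F ∈ Ideal.span {Q1 c₁ c₂} := by
  obtain ⟨M, G, hs, hm⟩ := clearing1 (c₁ := c₁) (c₂ := c₂) F
  have hG : G = 0 := by
    have hvan : ∀ a : Fin 6 → K, eval a (X 5 * (Q2 c₁ c₂ * G)) = 0 := by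
      intro a
      by_cases ha5 : a 5 = 0
      · simp [ha5]
      · set x : Fin 6 → K := Function.update a 1 ((c₂^2 * a 2 * a 3) / (c₁^2 * a 5)) with hxdef
        have hx5 : x 5 = a 5 := Function.update_of_ne (by decide) _ _
        have hx2 : x 2 = a 2 := Function.update_of_ne (by decide) _ _
        have hx3 : x 3 = a 3 := Function.update_of_ne (by decide) _ _
        have hx0 : x 0 = a 0 := Function.update_of_ne (by decide) _ _
        have hx4 : x 4 = a 4 := Function.update_of_ne (by decide) _ _
        have hx1 : x 1 = (c₂^2 * a 2 * a 3) / (c₁^2 * a 5) := Function.update_self _ _ _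
        have hQ1x : eval x (Q1 c₁ c₂) = 0 := by
          simp only [Q1, eval_sub, eval_mul, eval_C, eval_X, hx1, hx5, hx2, hx3]
          field_simp
          ring
        have hQ2x : eval x (Q2 c₁ c₂) = eval a (Q2 c₁ c₂) := by
          simp only [Q2, eval_sub, eval_mul, eval_C, eval_X, hx0, hx3, hx4, hx5]
        have hGx : eval x G = eval a G := by
          refine eval_congr_supported hs x a ?_
          intro j hj
          simp only [Set.mem_insert_iff, Set.mem_singleton_iff] at hj
          rcases hj with rfl | rfl | rfl | rfl | rfl <;> assumption
        obtain ⟨u, hu⟩ := Ideal.mem_span_singleton'.mp hF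
        have hqf : eval x (Q2 c₁ c₂) * eval x F = 0 := by
          have h := congrArg (eval x) hu
          simp only [eval_mul] at h
          rw [hQ1x, mul_zero] at h
          linear_combination -h
        obtain ⟨v, hv⟩ := Ideal.mem_span_singleton'.mp hm
        have hclear : eval x G = (c₁^2 * a 5)^M * eval x F := by
          have h := congrArg (eval x) hv
          simp only [eval_mul, eval_sub, map_pow, eval_C, eval_X] at h
          rw [hQ1x, mul_zero, hx5] at h
          linear_combination h
        have hkey : eval a (Q2 c₁ c₂) * eval a G = 0 := by
          rw [← hQ2x, ← hGx, hclear]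
          calc eval x (Q2 c₁ c₂) * ((c₁^2 * a 5)^M * eval x F)
              = (c₁^2 * a 5)^M * (eval x (Q2 c₁ c₂) * eval x F) := by ring
            _ = 0 := by rw [hqf, mul_zero]
        simp only [eval_mul]
        rw [hkey, mul_zero]
    have hzero : X 5 * (Q2 c₁ c₂ * G) = 0 := by
      apply MvPolynomial.funext; intro x; rw [hvan x]; simp
    rcases mul_eq_zero.mp hzero with h | h
    · exact absurd h (X_ne_zero _)
    · rcases mul_eq_zero.mp h with h' | h'
      · exact absurd h' (Q2_ne_zero h1)
      · exact h'
  rw [hG, sub_zero] at hm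
  exact strip5_pow h1 h2 M F hm


noncomputable def eta : MvPolynomial (Fin 6) K →ₐ[K] MvPolynomial (Fin 6) K :=
  aeval (fun j => if j = 3 then 0 else if j = 5 then 0 else X j)
@[simp] lemma eta_X (j : Fin 6) :
    eta (K := K) (X j) = if j = 3 then 0 else if j = 5 then 0 else X j := by
  simp [eta]
@[simp] lemma eta_C (a : K) : eta (C a) = C a := by simp [eta]


lemma ee5_ee3 (P : MvPolynomial (Fin 6) K) : ee 5 (ee 3 P) = eta P := by
  have h : (ee (K:=K) 5).comp (ee 3) = eta := by
    apply MvPolynomial.algHom_ext; intro i; fin_cases i <;> simp [eta]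
  calc ee 5 (ee 3 P) = ((ee (K:=K) 5).comp (ee 3)) P := rfl
    _ = eta P := by rw [h]

lemma C_sq_ne_zero (h1 : c₁ ≠ 0) : (C (c₁^2) : MvPolynomial (Fin 6) K) ≠ 0 := by
  simpa using pow_ne_zero 2 h1

lemma subC3 (h1 : c₁ ≠ 0) (h2 : c₂ ≠ 0) (F : MvPolynomial (Fin 6) K)
    (h : X 3 * F ∈ Ideal.span {Q1 c₁ c₂, Q2 c₁ c₂}) :
    ∃ A B Cc : MvPolynomial (Fin 6) K,
      A * Q1 c₁ c₂ + B * Q2 c₁ c₂ + Cc * Gg c₁ c₂ = F := by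
  rw [Ideal.mem_span_pair] at h
  obtain ⟨G, H, hGH⟩ := h
  have h3 := congrArg (ee 3) hGH
  rw [map_add, map_mul, map_mul, map_mul,
    show ee (K:=K) 3 (Q1 c₁ c₂) = C (c₁^2) * X 1 * X 5 from by simp [Q1],
    show ee (K:=K) 3 (Q2 c₁ c₂) = -(C (c₂^2) * X 4 * X 5) from by simp [Q2],
    show ee (K:=K) 3 (X 3) = 0 from by simp, zero_mul] at h3
  have h34 : (ee 3 G * (C (c₁^2) * X 1)) * X 5 = (ee 3 H * (C (c₂^2) * X 4)) * X 5 := by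
    linear_combination h3
  have h34' : ee 3 G * (C (c₁^2) * X 1) = ee 3 H * (C (c₂^2) * X 4) :=
    mul_right_cancel₀ (X_ne_zero 5) h34
  have h4 := congrArg (ee 4) h34'
  rw [map_mul,
    show ee (K:=K) 4 (C (c₁^2) * X 1) = C (c₁^2) * X 1 from by simp, map_mul,
    show ee (K:=K) 4 (C (c₂^2) * X 4) = 0 from by simp, mul_zero] at h4
  have h40 : ee 4 (ee 3 G) = 0 := by
    rcases mul_eq_zero.mp h4 with h' | h'
    · exact h'
    · exact absurd h' (mul_ne_zero (C_sq_ne_zero h1) (X_ne_zero 1))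
  obtain ⟨W, hW⟩ := Ideal.mem_span_singleton'.mp (mem_span_X_of_ee_eq_zero h40)
  have hH4 : (ee 3 H * C (c₂^2)) * X 4 = (W * (C (c₁^2) * X 1)) * X 4 := by
    rw [← hW] at h34'; linear_combination -h34'
  have hH4' : ee 3 H * C (c₂^2) = W * (C (c₁^2) * X 1) :=
    mul_right_cancel₀ (X_ne_zero 4) hH4
  obtain ⟨G', hG'⟩ := Ideal.mem_span_singleton'.mp (sub_ee_mem 3 G)
  obtain ⟨H', hH'⟩ := Ideal.mem_span_singleton'.mp (sub_ee_mem 3 H)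
  have hGdec : G = W * X 4 + G' * X 3 := by rw [hW, hG']; ring
  have hHdec : C (c₂^2) * H = W * (C (c₁^2) * X 1) + C (c₂^2) * (H' * X 3) := by
    rw [hH', ← hH4']; ring
  have key : X 3 * (C (c₂^2) * F)
      = X 3 * (W * Gg c₁ c₂ + C (c₂^2) * G' * Q1 c₁ c₂ + C (c₂^2) * H' * Q2 c₁ c₂) := by
    simp only [Q1, Q2, Gg, map_pow] at hGH hGdec hHdec ⊢
    linear_combination (-(C c₂ ^ 2) : MvPolynomial (Fin 6) K) * hGH
      + (C c₂ ^ 2 * (C c₁ ^ 2 * X 1 * X 5 - C c₂ ^ 2 * X 2 * X 3)) * hGdec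
      + (C c₁ ^ 2 * X 0 * X 3 - C c₂ ^ 2 * X 4 * X 5) * hHdec
  have hcc : C (c₂^2) * F
      = W * Gg c₁ c₂ + C (c₂^2) * G' * Q1 c₁ c₂ + C (c₂^2) * H' * Q2 c₁ c₂ :=
    mul_left_cancel₀ (X_ne_zero 3) key
  have hC : (C ((c₂^2)⁻¹) : MvPolynomial (Fin 6) K) * C (c₂^2) = 1 := by
    rw [← C_mul, inv_mul_cancel₀ (pow_ne_zero 2 h2), C_1]
  refine ⟨C ((c₂^2)⁻¹) * (C (c₂^2) * G'), C ((c₂^2)⁻¹) * (C (c₂^2) * H'), C ((c₂^2)⁻¹) * W, ?_⟩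
  calc C ((c₂^2)⁻¹) * (C (c₂^2) * G') * Q1 c₁ c₂ + C ((c₂^2)⁻¹) * (C (c₂^2) * H') * Q2 c₁ c₂
        + C ((c₂^2)⁻¹) * W * Gg c₁ c₂
      = C ((c₂^2)⁻¹) * (W * Gg c₁ c₂ + C (c₂^2) * G' * Q1 c₁ c₂ + C (c₂^2) * H' * Q2 c₁ c₂) := by
        ring
    _ = C ((c₂^2)⁻¹) * (C (c₂^2) * F) := by rw [← hcc]
    _ = F := by rw [← mul_assoc, hC, one_mul]

lemma subC5 (h1 : c₁ ≠ 0) (h2 : c₂ ≠ 0) (F : MvPolynomial (Fin 6) K)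
    (h : X 5 * F ∈ Ideal.span {Q1 c₁ c₂, Q2 c₁ c₂}) :
    ∃ A B Cc : MvPolynomial (Fin 6) K,
      A * Q1 c₁ c₂ + B * Q2 c₁ c₂ + Cc * Gg c₁ c₂ = F := by
  rw [Ideal.mem_span_pair] at h
  obtain ⟨G, H, hGH⟩ := h
  have h3 := congrArg (ee 5) hGH
  rw [map_add, map_mul, map_mul, map_mul,
    show ee (K:=K) 5 (Q1 c₁ c₂) = -(C (c₂^2) * X 2 * X 3) from by simp [Q1],
    show ee (K:=K) 5 (Q2 c₁ c₂) = C (c₁^2) * X 0 * X 3 from by simp [Q2],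
    show ee (K:=K) 5 (X 5) = 0 from by simp, zero_mul] at h3
  have h34 : (ee 5 H * (C (c₁^2) * X 0)) * X 3 = (ee 5 G * (C (c₂^2) * X 2)) * X 3 := by
    linear_combination h3
  have h34' : ee 5 H * (C (c₁^2) * X 0) = ee 5 G * (C (c₂^2) * X 2) :=
    mul_right_cancel₀ (X_ne_zero 3) h34
  have h4 := congrArg (ee 0) h34'
  rw [map_mul,
    show ee (K:=K) 0 (C (c₁^2) * X 0) = 0 from by simp, mul_zero, map_mul,
    show ee (K:=K) 0 (C (c₂^2) * X 2) = C (c₂^2) * X 2 from by simp] at h4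
  have h40 : ee 0 (ee 5 G) = 0 := by
    rcases mul_eq_zero.mp h4.symm with h' | h'
    · exact h'
    · exact absurd h' (mul_ne_zero (C_sq_ne_zero (c₁ := c₂) h2) (X_ne_zero 2))
  obtain ⟨W, hW⟩ := Ideal.mem_span_singleton'.mp (mem_span_X_of_ee_eq_zero h40)
  have hH4 : (ee 5 H * C (c₁^2)) * X 0 = (W * (C (c₂^2) * X 2)) * X 0 := by
    rw [← hW] at h34'; linear_combination h34'
  have hH4' : ee 5 H * C (c₁^2) = W * (C (c₂^2) * X 2) :=
    mul_right_cancel₀ (X_ne_zero 0) hH4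
  obtain ⟨G', hG'⟩ := Ideal.mem_span_singleton'.mp (sub_ee_mem 5 G)
  obtain ⟨H', hH'⟩ := Ideal.mem_span_singleton'.mp (sub_ee_mem 5 H)
  have hGdec : G = W * X 0 + G' * X 5 := by rw [hW, hG']; ring
  have hHdec : C (c₁^2) * H = W * (C (c₂^2) * X 2) + C (c₁^2) * (H' * X 5) := by
    rw [hH', ← hH4']; ring
  have key : X 5 * (C (c₁^2) * F)
      = X 5 * (W * Gg c₁ c₂ + C (c₁^2) * G' * Q1 c₁ c₂ + C (c₁^2) * H' * Q2 c₁ c₂) := by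
    simp only [Q1, Q2, Gg, map_pow] at hGH hGdec hHdec ⊢
    linear_combination (-(C c₁ ^ 2) : MvPolynomial (Fin 6) K) * hGH
      + (C c₁ ^ 2 * (C c₁ ^ 2 * X 1 * X 5 - C c₂ ^ 2 * X 2 * X 3)) * hGdec
      + (C c₁ ^ 2 * X 0 * X 3 - C c₂ ^ 2 * X 4 * X 5) * hHdec
  have hcc : C (c₁^2) * F
      = W * Gg c₁ c₂ + C (c₁^2) * G' * Q1 c₁ c₂ + C (c₁^2) * H' * Q2 c₁ c₂ :=
    mul_left_cancel₀ (X_ne_zero 5) key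
  have hC : (C ((c₁^2)⁻¹) : MvPolynomial (Fin 6) K) * C (c₁^2) = 1 := by
    rw [← C_mul, inv_mul_cancel₀ (pow_ne_zero 2 h1), C_1]
  refine ⟨C ((c₁^2)⁻¹) * (C (c₁^2) * G'), C ((c₁^2)⁻¹) * (C (c₁^2) * H'), C ((c₁^2)⁻¹) * W, ?_⟩
  calc C ((c₁^2)⁻¹) * (C (c₁^2) * G') * Q1 c₁ c₂ + C ((c₁^2)⁻¹) * (C (c₁^2) * H') * Q2 c₁ c₂
        + C ((c₁^2)⁻¹) * W * Gg c₁ c₂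
      = C ((c₁^2)⁻¹) * (W * Gg c₁ c₂ + C (c₁^2) * G' * Q1 c₁ c₂ + C (c₁^2) * H' * Q2 c₁ c₂) := by
        ring
    _ = C ((c₁^2)⁻¹) * (C (c₁^2) * F) := by rw [← hcc]
    _ = F := by rw [← mul_assoc, hC, one_mul]

lemma CcGg_mem (h1 : c₁ ≠ 0) (Cc : MvPolynomial (Fin 6) K)
    (hmem : Q3 c₁ c₂ * Cc * Gg c₁ c₂ ∈ Ideal.span {Q1 c₁ c₂, Q2 c₁ c₂}) :
    Cc * Gg c₁ c₂ ∈ Ideal.span {Q1 c₁ c₂, Q2 c₁ c₂} := by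
  obtain ⟨U, V, hUV⟩ := Ideal.mem_span_pair.mp hmem
  have hη := congrArg eta hUV
  simp only [map_add, map_mul,
    show eta (K:=K) (Q1 c₁ c₂) = 0 from by simp [Q1],
    show eta (K:=K) (Q2 c₁ c₂) = 0 from by simp [Q2],
    show eta (K:=K) (Q3 c₁ c₂) = Q3 c₁ c₂ from by simp [Q3],
    show eta (K:=K) (Gg c₁ c₂) = Gg c₁ c₂ from by simp [Gg],
    mul_zero, add_zero, zero_add] at hη
  have hC0 : eta Cc = 0 := by
    rcases mul_eq_zero.mp hη.symm with h' | h'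
    · rcases mul_eq_zero.mp h' with h'' | h''
      · exact absurd h'' (Q3_ne_zero h1)
      · exact h''
    · exact absurd h' (Gg_ne_zero h1)
  have h5 : ee 5 (ee 3 Cc) = 0 := by rw [ee5_ee3]; exact hC0
  obtain ⟨u, hu⟩ := Ideal.mem_span_singleton'.mp (sub_ee_mem 3 Cc)
  obtain ⟨v, hv⟩ := Ideal.mem_span_singleton'.mp (mem_span_X_of_ee_eq_zero h5)
  have hCdec : Cc = u * X 3 + v * X 5 := by rw [hu, hv]; ring
  have hX3g : X 3 * Gg c₁ c₂ = C (c₂^2) * X 4 * Q1 c₁ c₂ + C (c₁^2) * X 1 * Q2 c₁ c₂ := by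
    simp only [Q1, Q2, Gg, map_pow]; ring
  have hX5g : X 5 * Gg c₁ c₂ = C (c₁^2) * X 0 * Q1 c₁ c₂ + C (c₂^2) * X 2 * Q2 c₁ c₂ := by
    simp only [Q1, Q2, Gg, map_pow]; ring
  have hrw : Cc * Gg c₁ c₂
      = (u * (C (c₂^2) * X 4) + v * (C (c₁^2) * X 0)) * Q1 c₁ c₂
        + (u * (C (c₁^2) * X 1) + v * (C (c₂^2) * X 2)) * Q2 c₁ c₂ := by
    rw [hCdec]
    linear_combination u * hX3g + v * hX5g
  rw [hrw]
  exact add_mem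
    (Ideal.mul_mem_left _ _ (Ideal.subset_span (Set.mem_insert _ _)))
    (Ideal.mul_mem_left _ _ (Ideal.subset_span (Set.mem_insert_of_mem _ rfl)))

lemma lemB3 (h1 : c₁ ≠ 0) (h2 : c₂ ≠ 0) (F : MvPolynomial (Fin 6) K)
    (hX : X 3 * F ∈ Ideal.span {Q1 c₁ c₂, Q2 c₁ c₂})
    (hq : Q3 c₁ c₂ * F ∈ Ideal.span {Q1 c₁ c₂, Q2 c₁ c₂}) :
    F ∈ Ideal.span {Q1 c₁ c₂, Q2 c₁ c₂} := by
  obtain ⟨A, B, Cc, hF⟩ := subC3 h1 h2 F hX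
  have hmem : Q3 c₁ c₂ * Cc * Gg c₁ c₂ ∈ Ideal.span {Q1 c₁ c₂, Q2 c₁ c₂} := by
    have hrw : Q3 c₁ c₂ * Cc * Gg c₁ c₂
        = Q3 c₁ c₂ * F - (Q3 c₁ c₂ * A) * Q1 c₁ c₂ - (Q3 c₁ c₂ * B) * Q2 c₁ c₂ := by
      rw [← hF]; ring
    rw [hrw]
    exact sub_mem (sub_mem hq
      (Ideal.mul_mem_left _ _ (Ideal.subset_span (Set.mem_insert _ _))))
      (Ideal.mul_mem_left _ _ (Ideal.subset_span (Set.mem_insert_of_mem _ rfl)))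
  have hCg := CcGg_mem h1 Cc hmem
  rw [← hF]
  exact add_mem (add_mem
    (Ideal.mul_mem_left _ _ (Ideal.subset_span (Set.mem_insert _ _)))
    (Ideal.mul_mem_left _ _ (Ideal.subset_span (Set.mem_insert_of_mem _ rfl)))) hCg

lemma lemB5 (h1 : c₁ ≠ 0) (h2 : c₂ ≠ 0) (F : MvPolynomial (Fin 6) K)
    (hX : X 5 * F ∈ Ideal.span {Q1 c₁ c₂, Q2 c₁ c₂})
    (hq : Q3 c₁ c₂ * F ∈ Ideal.span {Q1 c₁ c₂, Q2 c₁ c₂}) :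
    F ∈ Ideal.span {Q1 c₁ c₂, Q2 c₁ c₂} := by
  obtain ⟨A, B, Cc, hF⟩ := subC5 h1 h2 F hX
  have hmem : Q3 c₁ c₂ * Cc * Gg c₁ c₂ ∈ Ideal.span {Q1 c₁ c₂, Q2 c₁ c₂} := by
    have hrw : Q3 c₁ c₂ * Cc * Gg c₁ c₂
        = Q3 c₁ c₂ * F - (Q3 c₁ c₂ * A) * Q1 c₁ c₂ - (Q3 c₁ c₂ * B) * Q2 c₁ c₂ := by
      rw [← hF]; ring
    rw [hrw]
    exact sub_mem (sub_mem hq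
      (Ideal.mul_mem_left _ _ (Ideal.subset_span (Set.mem_insert _ _))))
      (Ideal.mul_mem_left _ _ (Ideal.subset_span (Set.mem_insert_of_mem _ rfl)))
  have hCg := CcGg_mem h1 Cc hmem
  rw [← hF]
  exact add_mem (add_mem
    (Ideal.mul_mem_left _ _ (Ideal.subset_span (Set.mem_insert _ _)))
    (Ideal.mul_mem_left _ _ (Ideal.subset_span (Set.mem_insert_of_mem _ rfl)))) hCg

lemma stripB (h1 : c₁ ≠ 0) (h2 : c₂ ≠ 0) {i : Fin 6}
    (hlem : ∀ F : MvPolynomial (Fin 6) K,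
      X i * F ∈ Ideal.span {Q1 c₁ c₂, Q2 c₁ c₂} →
      Q3 c₁ c₂ * F ∈ Ideal.span {Q1 c₁ c₂, Q2 c₁ c₂} →
      F ∈ Ideal.span {Q1 c₁ c₂, Q2 c₁ c₂}) :
    ∀ (N : ℕ) (F : MvPolynomial (Fin 6) K),
      Q3 c₁ c₂ * F ∈ Ideal.span {Q1 c₁ c₂, Q2 c₁ c₂} →
      (C (c₁^2) * X i)^N * F ∈ Ideal.span {Q1 c₁ c₂, Q2 c₁ c₂} →
      F ∈ Ideal.span {Q1 c₁ c₂, Q2 c₁ c₂} := by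
  intro N
  induction N with
  | zero => intro F _ h; simpa using h
  | succ N ih =>
      intro F hq h
      rw [pow_succ, mul_assoc] at h
      have step := ih _ (by rw [show Q3 c₁ c₂ * (C (c₁^2) * X i * F) = (C (c₁^2) * X i) * (Q3 c₁ c₂ * F) from by ring]; exact Ideal.mul_mem_left _ _ hq) h
      have hXi : X i * (C (c₁^2) * F) ∈ Ideal.span {Q1 c₁ c₂, Q2 c₁ c₂} := by
        rw [show X i * (C (c₁^2) * F) = C (c₁^2) * X i * F from by ring]
        exact step
      have hq' : Q3 c₁ c₂ * (C (c₁^2) * F) ∈ Ideal.span {Q1 c₁ c₂, Q2 c₁ c₂} := by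
        rw [show Q3 c₁ c₂ * (C (c₁^2) * F) = C (c₁^2) * (Q3 c₁ c₂ * F) from by ring]
        exact Ideal.mul_mem_left _ _ hq
      have hCF := hlem _ hXi hq'
      have := Ideal.mul_mem_left _ (C ((c₁^2)⁻¹)) hCF
      rwa [← mul_assoc, ← C_mul, inv_mul_cancel₀ (pow_ne_zero 2 h1), C_1, one_mul] at this

lemma reg3 [Infinite K] (h1 : c₁ ≠ 0) (h2 : c₂ ≠ 0) (h6 : c₁^6 - c₂^6 ≠ 0)
    (F : MvPolynomial (Fin 6) K)
    (hF : Q3 c₁ c₂ * F ∈ Ideal.span {Q1 c₁ c₂, Q2 c₁ c₂}) :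
    F ∈ Ideal.span {Q1 c₁ c₂, Q2 c₁ c₂} := by
  obtain ⟨N, M, G, hs, hm⟩ := clearing2 (c₁ := c₁) (c₂ := c₂) F
  have hG : G = 0 := by
    have hvan : ∀ a : Fin 6 → K, eval a (X 2 * (X 3 * (X 4 * (X 5 * G)))) = 0 := by
      intro a
      by_cases h2a : a 2 = 0
      · simp [h2a]
      by_cases h3a : a 3 = 0
      · simp [h3a]
      by_cases h4a : a 4 = 0
      · simp [h4a]
      by_cases h5a : a 5 = 0
      · simp [h5a]
      set x : Fin 6 → K := ![c₂^2/c₁^2*(a 4/a 3)*(a 5), c₂^2/c₁^2*(a 2/a 5)*(a 3),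
        (a 2/a 5)*(a 5), a 3, (a 4/a 3)*(a 3), a 5] with hxdef
      have hq1 : eval x (Q1 c₁ c₂) = 0 := by
        simp only [Q1, eval_sub, eval_mul, eval_C, eval_X]
        rw [show x 1 = c₂^2/c₁^2*(a 2/a 5)*(a 3) from rfl,
          show x 5 = a 5 from rfl, show x 2 = (a 2/a 5)*(a 5) from rfl,
          show x 3 = a 3 from rfl]
        field_simp
        ring
      have hq2 : eval x (Q2 c₁ c₂) = 0 := by
        simp only [Q2, eval_sub, eval_mul, eval_C, eval_X]
        rw [show x 0 = c₂^2/c₁^2*(a 4/a 3)*(a 5) from rfl,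
          show x 3 = a 3 from rfl, show x 4 = (a 4/a 3)*(a 3) from rfl,
          show x 5 = a 5 from rfl]
        field_simp
        ring
      have hq3 : eval x (Q3 c₁ c₂) = a 2 * a 4 * (c₁^6 - c₂^6) / c₁^4 := by
        simp only [Q3, eval_sub, eval_mul, eval_C, eval_X]
        rw [show x 2 = (a 2/a 5)*(a 5) from rfl, show x 4 = (a 4/a 3)*(a 3) from rfl,
          show x 0 = c₂^2/c₁^2*(a 4/a 3)*(a 5) from rfl,
          show x 1 = c₂^2/c₁^2*(a 2/a 5)*(a 3) from rfl]
        field_simp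
      have hq3ne : eval x (Q3 c₁ c₂) ≠ 0 := by
        rw [hq3]
        exact div_ne_zero (mul_ne_zero (mul_ne_zero h2a h4a) h6) (pow_ne_zero 4 h1)
      have hxF : eval x F = 0 := by
        obtain ⟨u, v, huv⟩ := Ideal.mem_span_pair.mp hF
        have h := congrArg (eval x) huv
        simp only [map_add, map_mul] at h
        rw [hq1, hq2, mul_zero, mul_zero, add_zero] at h
        rcases mul_eq_zero.mp h.symm with h' | h'
        · exact absurd h' hq3ne
        · exact h'
      have hxG : eval x G = 0 := by
        obtain ⟨u, v, huv⟩ := Ideal.mem_span_pair.mp hm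
        have h := congrArg (eval x) huv
        simp only [map_add, map_mul, map_sub, map_pow] at h
        rw [hq1, hq2, mul_zero, mul_zero, add_zero, hxF, mul_zero, mul_zero, zero_sub] at h
        linear_combination h
      have haG : eval a G = 0 := by
        rw [← hxG]
        refine eval_congr_supported hs a x ?_
        intro j hj
        simp only [Set.mem_insert_iff, Set.mem_singleton_iff] at hj
        rcases hj with rfl | rfl | rfl | rfl
        · exact (div_mul_cancel₀ (a 2) h5a).symm
        · rfl
        · exact (div_mul_cancel₀ (a 4) h3a).symm
        · rfl
      simp [haG]
    have hzero : X 2 * (X 3 * (X 4 * (X 5 * G))) = 0 := by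
      apply MvPolynomial.funext; intro y; rw [hvan y]; simp
    rcases mul_eq_zero.mp hzero with h | h
    · exact absurd h (X_ne_zero _)
    rcases mul_eq_zero.mp h with h | h
    · exact absurd h (X_ne_zero _)
    rcases mul_eq_zero.mp h with h | h
    · exact absurd h (X_ne_zero _)
    rcases mul_eq_zero.mp h with h | h
    · exact absurd h (X_ne_zero _)
    exact h
  rw [hG, sub_zero] at hm
  have step1 : (C (c₁^2) * X 5)^M * F ∈ Ideal.span {Q1 c₁ c₂, Q2 c₁ c₂} := by
    refine stripB h1 h2 (fun F' => lemB3 h1 h2 F') N _ ?_ hm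
    rw [show Q3 c₁ c₂ * ((C (c₁^2) * X 5)^M * F)
      = (C (c₁^2) * X 5)^M * (Q3 c₁ c₂ * F) from by ring]
    exact Ideal.mul_mem_left _ _ hF
  exact stripB h1 h2 (fun F' => lemB5 h1 h2 F') M F hF step1


lemma ofList_pair (a b : MvPolynomial (Fin 6) K) :
    Ideal.ofList [a, b] = Ideal.span {a, b} := by
  rw [Ideal.ofList_cons, Ideal.ofList_singleton, ← Ideal.span_insert]

lemma isRegular_seq [IsAlgClosed K] (h1 : c₁ ≠ 0) (h2 : c₂ ≠ 0) (h6 : c₁^6 - c₂^6 ≠ 0) :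
    RingTheory.Sequence.IsRegular (MvPolynomial (Fin 6) K)
      [Q1 c₁ c₂, Q2 c₁ c₂, Q3 c₁ c₂] := by
  constructor
  · rw [RingTheory.Sequence.isWeaklyRegular_iff]
    intro i hi
    simp only [List.length_cons, List.length_nil] at hi
    interval_cases i
    · simp only [List.take_zero, List.getElem_cons_zero]
      refine smul_reg_helper ?_
      intro f hf
      rw [Ideal.ofList_nil, Ideal.mem_bot] at hf ⊢
      rcases mul_eq_zero.mp hf with h' | h'
      · exact absurd h' (Q1_ne_zero h1)
      · exact h'
    · have ht : List.take 1 [Q1 c₁ c₂, Q2 c₁ c₂, Q3 c₁ c₂] = [Q1 c₁ c₂] := rfl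
      rw [ht]
      simp only [List.getElem_cons_succ, List.getElem_cons_zero]
      refine smul_reg_helper ?_
      intro f hf
      rw [Ideal.ofList_singleton] at hf ⊢
      exact reg2 h1 h2 f hf
    · have ht : List.take 2 [Q1 c₁ c₂, Q2 c₁ c₂, Q3 c₁ c₂] = [Q1 c₁ c₂, Q2 c₁ c₂] := rfl
      rw [ht]
      simp only [List.getElem_cons_succ, List.getElem_cons_zero]
      refine smul_reg_helper ?_
      intro f hf
      rw [ofList_pair] at hf ⊢
      exact reg3 h1 h2 h6 f hf
  · intro hTop
    have h1m : (1 : MvPolynomial (Fin 6) K) ∈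
        Ideal.ofList [Q1 c₁ c₂, Q2 c₁ c₂, Q3 c₁ c₂] • (⊤ : Submodule (MvPolynomial (Fin 6) K) (MvPolynomial (Fin 6) K)) := by
      rw [← hTop]; trivial
    rw [smul_eq_mul, Ideal.mul_top] at h1m
    have hker : Ideal.ofList [Q1 c₁ c₂, Q2 c₁ c₂, Q3 c₁ c₂] ≤
        RingHom.ker (eval (fun _ : Fin 6 => (0:K))) := by
      rw [Ideal.span_le]
      intro r hr
      simp only [Set.mem_setOf_eq, List.mem_cons, List.mem_singleton, List.not_mem_nil,
        or_false] at hr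
      rcases hr with rfl | rfl | rfl <;>
        simp [RingHom.mem_ker, Q1, Q2, Q3]
    have := hker h1m
    rw [RingHom.mem_ker] at this
    simp at this

end Stmt16

@[simp] lemma cons_val_five' {m : ℕ} {α : Type*} (x : α) (u : Fin (m+5) → α) :
    Matrix.vecCons x u 5 =
      Matrix.vecHead (Matrix.vecTail (Matrix.vecTail (Matrix.vecTail (Matrix.vecTail u)))) := rfl

/-- For `c₁c₂(c₁⁶−c₂⁶) ≠ 0` there is a common zero of the three quadrics
`q₁,q₂,q₃` at which their Jacobian matrix has rank 3; hence `q₁,q₂,q₃` is a regular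
sequence in `K[z₂,z₃,z₄,z₅,z₇,z₉]`. -/
theorem stmt16 {K : Type*} [Field K] [IsAlgClosed K]
    (h2 : (2 : K) ≠ 0) (h3 : (3 : K) ≠ 0)
    (c₁ c₂ : K) (hc : c₁*c₂*(c₁^6 - c₂^6) ≠ 0) :
    (∃ z₂ z₃ z₄ z₅ z₇ z₉ : K,
      c₁^2*z₃*z₉ - c₂^2*z₄*z₅ = 0 ∧
      c₁^2*z₂*z₅ - c₂^2*z₇*z₉ = 0 ∧
      c₁^2*z₄*z₇ - c₂^2*z₂*z₃ = 0 ∧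
      (!![(0:K), c₁^2*z₉, -(c₂^2*z₅), -(c₂^2*z₄), 0, c₁^2*z₃;
          c₁^2*z₅, 0, 0, c₁^2*z₂, -(c₂^2*z₉), -(c₂^2*z₇);
          -(c₂^2*z₃), -(c₂^2*z₂), c₁^2*z₇, 0, c₁^2*z₄, 0] :
        Matrix (Fin 3) (Fin 6) K).rank = 3) ∧
    RingTheory.Sequence.IsRegular (MvPolynomial (Fin 6) K)
      ([C (c₁^2) * X 1 * X 5 - C (c₂^2) * X 2 * X 3,
        C (c₁^2) * X 0 * X 3 - C (c₂^2) * X 4 * X 5,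
        C (c₁^2) * X 2 * X 4 - C (c₂^2) * X 0 * X 1] :
        List (MvPolynomial (Fin 6) K)) := by
  have h1 : c₁ ≠ 0 := fun h => hc (by rw [h]; ring)
  have h2' : c₂ ≠ 0 := fun h => hc (by rw [h]; ring)
  have h6 : c₁^6 - c₂^6 ≠ 0 := fun h => hc (by rw [h]; ring)
  constructor
  · -- existence of smooth point
    refine ⟨0, c₂^2, c₁, c₁, 0, 1, by ring, by ring, by ring, ?_⟩
    set A : Matrix (Fin 3) (Fin 6) K :=
      !![(0:K), c₁^2*1, -(c₂^2*c₁), -(c₂^2*c₁), 0, c₁^2*(c₂^2);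
         c₁^2*c₁, 0, 0, c₁^2*0, -(c₂^2*1), -(c₂^2*0);
         -(c₂^2*(c₂^2)), -(c₂^2*0), c₁^2*0, 0, c₁^2*c₁, 0] with hA
    set E : Matrix (Fin 6) (Fin 3) K :=
      !![0,1,0; 1,0,0; 0,0,0; 0,0,0; 0,0,1; 0,0,0] with hE
    set S : Matrix (Fin 3) (Fin 3) K :=
      !![c₁^2, 0, 0; 0, c₁^2*c₁, -(c₂^2*1); 0, -(c₂^2*(c₂^2)), c₁^2*c₁] with hS
    have hAE : A * E = S := by
      rw [hA, hE, hS]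
      ext i j
      rw [Matrix.mul_apply, Fin.sum_univ_six]
      fin_cases i <;> fin_cases j <;>
        simp [Matrix.vecHead, Matrix.vecTail]
    have hdet : S.det = c₁^2 * (c₁^6 - c₂^6) := by
      rw [hS, Matrix.det_fin_three]
      simp
      ring
    have hdet' : S.det ≠ 0 := by
      rw [hdet]; exact mul_ne_zero (pow_ne_zero 2 h1) h6
    have hSrank : S.rank = 3 := by
      rw [Matrix.rank_of_isUnit S ((Matrix.isUnit_iff_isUnit_det S).mpr
        (isUnit_iff_ne_zero.mpr hdet'))]
      simp
    apply le_antisymm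
    · exact (Matrix.rank_le_card_height A).trans (by simp)
    · calc (3:ℕ) = S.rank := hSrank.symm
        _ = (A * E).rank := by rw [hAE]
        _ ≤ A.rank := Matrix.rank_mul_le_left A E
  · exact Stmt16.isRegular_seq h1 h2' h6
end

section
/- If z ∈ K⁹ has all coordinates that are cube roots of unity (z_i = ω^{e_i} for a fixed primitive cube root of unity ω), then the 5×9 matrix CS(z) has rank ≤ 2 (i.e., all 3×3 minors vanish) if and only if the exponents satisfy e₁+e₂+e₃ = e₄+e₅+e₆ = e₇+e₈+e₉ and e₁+e₄+e₇ = e₂+e₅+e₈ (mod 3); in particular, normalizing e₁ = 0, there are exactly 3⁵ = 243 such points. -/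
def gg : ZMod 3 → ℤ × ℤ := fun x => if x = 0 then (1, 0) else if x = 1 then (0, 1) else (-1, -1)

set_option maxRecDepth 100000 in
set_option maxHeartbeats 4000000 in
theorem selectMinor (a0 a1 a2 a3 a4 a5 a6 a7 a8 : ZMod 3)
    (h : ¬(a0 + a1 + a2 = a3 + a4 + a5 ∧ a0 + a1 + a2 = a6 + a7 + a8 ∧
          a0 + a3 + a6 = a1 + a4 + a7)) :
    ((((gg (a1 + a2 + (a4 + a7) + (a1 + a5))).1 + (gg (a0 + a2 + (a0 + a3) + (a4 + a8))).1 + (gg (a7 + a8 + (a3 + a6) + (a5 + a6))).1 - (gg (a1 + a2 + (a0 + a3) + (a5 + a6))).1 - (gg (a0 + a2 + (a3 + a6) + (a1 + a5))).1 - (gg (a7 + a8 + (a4 + a7) + (a4 + a8))).1)^2 - ((gg (a1 + a2 + (a4 + a7) + (a1 + a5))).1 + (gg (a0 + a2 + (a0 + a3) + (a4 + a8))).1 + (gg (a7 + a8 + (a3 + a6) + (a5 + a6))).1 - (gg (a1 + a2 + (a0 + a3) + (a5 + a6))).1 - (gg (a0 + a2 + (a3 + a6) + (a1 + a5))).1 -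 (gg (a7 + a8 + (a4 + a7) + (a4 + a8))).1)*((gg (a1 + a2 + (a4 + a7) + (a1 + a5))).2 + (gg (a0 + a2 + (a0 + a3) + (a4 + a8))).2 + (gg (a7 + a8 + (a3 + a6) + (a5 + a6))).2 - (gg (a1 + a2 + (a0 + a3) + (a5 + a6))).2 - (gg (a0 + a2 + (a3 + a6) + (a1 + a5))).2 - (gg (a7 + a8 + (a4 + a7) + (a4 + a8))).2) + ((gg (a1 + a2 + (a4 + a7) + (a1 + a5))).2 + (gg (a0 + a2 + (a0 + a3) + (a4 + a8))).2 + (gg (a7 + a8 + (a3 + a6) + (a5 + a6))).2 - (gg (a1 + a2 + (a0 + a3) + (a5 + a6))).2 - (gg (a0 + a2 + (a3 + a6) + (a1 + a5))).2 - (gg (a7 + a8 + (a4 + a7) + (a4 + a8))).2)^2) = 9 ∨ (((gg (a1 + a2 + (a4 + a7) + (a1 + a5))).1 + (gg (a0 + a2 + (a0 + a3) + (a4 + a8))).1 + (gg (a7 + a8 + (a3 + a6) + (a5 + a6))).1 - (gg (a1 + a2 + (a0 + a3) + (a5 + a6))).1 - (gg (a0 + a2 + (a3 + a6) + (a1 +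 a5))).1 - (gg (a7 + a8 + (a4 + a7) + (a4 + a8))).1)^2 - ((gg (a1 + a2 + (a4 + a7) + (a1 + a5))).1 + (gg (a0 + a2 + (a0 + a3) + (a4 + a8))).1 + (gg (a7 + a8 + (a3 + a6) + (a5 + a6))).1 - (gg (a1 + a2 + (a0 + a3) + (a5 + a6))).1 - (gg (a0 + a2 + (a3 + a6) + (a1 + a5))).1 - (gg (a7 + a8 + (a4 + a7) + (a4 + a8))).1)*((gg (a1 + a2 + (a4 + a7) + (a1 + a5))).2 + (gg (a0 + a2 + (a0 + a3) + (a4 + a8))).2 + (gg (a7 + a8 + (a3 + a6) + (a5 + a6))).2 - (gg (a1 + a2 + (a0 + a3) + (a5 + a6))).2 - (gg (a0 + a2 + (a3 + a6) + (a1 + a5))).2 - (gg (a7 + a8 + (a4 + a7) + (a4 + a8))).2) + ((gg (a1 + a2 + (a4 + a7) + (a1 + a5))).2 + (gg (a0 + a2 + (a0 + a3) + (a4 + a8))).2 + (gg (a7 + a8 + (a3 + a6) + (a5 + a6))).2 - (gg (a1 + a2 + (a0 + a3) + (a5 + a6))).2 - (gg (a0 + a2 + (a3 + a6) + (a1 +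 a5))).2 - (gg (a7 + a8 + (a4 + a7) + (a4 + a8))).2)^2) = 27) ∨ ((((gg (a1 + a1 + (a3 + a5) + (a2 + a3))).1 + (gg (a4 + a4 + (a6 + a8) + (a5 + a6))).1 + (gg (a7 + a7 + (a0 + a2) + (a0 + a8))).1 - (gg (a1 + a1 + (a6 + a8) + (a0 + a8))).1 - (gg (a4 + a4 + (a0 + a2) + (a2 + a3))).1 - (gg (a7 + a7 + (a3 + a5) + (a5 + a6))).1)^2 - ((gg (a1 + a1 + (a3 + a5) + (a2 + a3))).1 + (gg (a4 + a4 + (a6 + a8) + (a5 + a6))).1 + (gg (a7 + a7 + (a0 + a2) + (a0 + a8))).1 - (gg (a1 + a1 + (a6 + a8) + (a0 + a8))).1 - (gg (a4 + a4 + (a0 + a2) + (a2 + a3))).1 - (gg (a7 + a7 + (a3 + a5) + (a5 + a6))).1)*((gg (a1 + a1 + (a3 + a5) + (a2 + a3))).2 + (gg (a4 + a4 + (a6 + a8) + (a5 + a6))).2 + (gg (a7 + a7 + (a0 + a2) + (a0 + a8))).2 - (gg (a1 + a1 + (a6 + a8) + (a0 + a8))).2 - (gg (a4 + a4 + (a0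 + a2) + (a2 + a3))).2 - (gg (a7 + a7 + (a3 + a5) + (a5 + a6))).2) + ((gg (a1 + a1 + (a3 + a5) + (a2 + a3))).2 + (gg (a4 + a4 + (a6 + a8) + (a5 + a6))).2 + (gg (a7 + a7 + (a0 + a2) + (a0 + a8))).2 - (gg (a1 + a1 + (a6 + a8) + (a0 + a8))).2 - (gg (a4 + a4 + (a0 + a2) + (a2 + a3))).2 - (gg (a7 + a7 + (a3 + a5) + (a5 + a6))).2)^2) = 9 ∨ (((gg (a1 + a1 + (a3 + a5) + (a2 + a3))).1 + (gg (a4 + a4 + (a6 + a8) + (a5 + a6))).1 + (gg (a7 + a7 + (a0 + a2) + (a0 + a8))).1 - (gg (a1 + a1 + (a6 + a8) + (a0 + a8))).1 - (gg (a4 + a4 + (a0 + a2) + (a2 + a3))).1 - (gg (a7 + a7 + (a3 + a5) + (a5 + a6))).1)^2 - ((gg (a1 + a1 + (a3 + a5) + (a2 + a3))).1 + (gg (a4 + a4 + (a6 + a8) + (a5 + a6))).1 + (gg (a7 + a7 + (a0 + a2) + (a0 + a8))).1 - (gg (a1 + a1 + (a6 + a8) + (a0 + a8))).1 - (gg (a4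 + a4 + (a0 + a2) + (a2 + a3))).1 - (gg (a7 + a7 + (a3 + a5) + (a5 + a6))).1)*((gg (a1 + a1 + (a3 + a5) + (a2 + a3))).2 + (gg (a4 + a4 + (a6 + a8) + (a5 + a6))).2 + (gg (a7 + a7 + (a0 + a2) + (a0 + a8))).2 - (gg (a1 + a1 + (a6 + a8) + (a0 + a8))).2 - (gg (a4 + a4 + (a0 + a2) + (a2 + a3))).2 - (gg (a7 + a7 + (a3 + a5) + (a5 + a6))).2) + ((gg (a1 + a1 + (a3 + a5) + (a2 + a3))).2 + (gg (a4 + a4 + (a6 + a8) + (a5 + a6))).2 + (gg (a7 + a7 + (a0 + a2) + (a0 + a8))).2 - (gg (a1 + a1 + (a6 + a8) + (a0 + a8))).2 - (gg (a4 + a4 + (a0 + a2) + (a2 + a3))).2 - (gg (a7 + a7 + (a3 + a5) + (a5 + a6))).2)^2) = 27) := by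
  revert h; revert a0 a1 a2 a3 a4 a5 a6 a7 a8; decide

theorem keyAB {K : Type*} [Field K] (h3 : (3 : K) ≠ 0) (ω : K)
    (hrel : ω ^ 2 + ω + 1 = 0) (A B : ℤ)
    (hAB : (A : K) + (B : K) * ω = 0)
    (hN : A ^ 2 - A * B + B ^ 2 = 9 ∨ A ^ 2 - A * B + B ^ 2 = 27) : False := by
  have hnorm : ((A ^ 2 - A * B + B ^ 2 : ℤ) : K) = 0 := by
    push_cast
    linear_combination ((A : K) + (B : K) * ω ^ 2) * hAB +
      (-(A : K) * (B : K) + (B : K) ^ 2 * (1 - ω)) * hrel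
  rcases hN with h | h <;> rw [h] at hnorm
  · have h9 : (9 : K) = 0 := by exact_mod_cast hnorm
    have h33 : (3 : K) * 3 = 0 := by linear_combination h9
    rcases mul_eq_zero.1 h33 with h' | h' <;> exact h3 h'
  · have h27 : (27 : K) = 0 := by exact_mod_cast hnorm
    have h333 : (3 : K) * (3 * 3) = 0 := by linear_combination h27
    rcases mul_eq_zero.1 h333 with h' | h'
    · exact h3 h'
    · rcases mul_eq_zero.1 h' with h'' | h'' <;> exact h3 h''

theorem keydet {K : Type*} [Field K] (h3 : (3 : K) ≠ 0) (ω : K)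
    (hω : IsPrimitiveRoot ω 3) (x0 x1 x2 y0 y1 y2 : ZMod 3)
    (hd : ω ^ x0.val + ω ^ x1.val + ω ^ x2.val - ω ^ y0.val - ω ^ y1.val - ω ^ y2.val = 0)
    (hN : (((gg x0).1 + (gg x1).1 + (gg x2).1 - (gg y0).1 - (gg y1).1 - (gg y2).1)^2 - ((gg x0).1 + (gg x1).1 + (gg x2).1 - (gg y0).1 - (gg y1).1 - (gg y2).1)*((gg x0).2 + (gg x1).2 + (gg x2).2 - (gg y0).2 - (gg y1).2 - (gg y2).2) + ((gg x0).2 + (gg x1).2 + (gg x2).2 - (gg y0).2 - (gg y1).2 - (gg y2).2)^2) = 9 ∨ (((gg x0).1 + (gg x1).1 + (gg x2).1 - (gg y0).1 - (gg y1).1 - (gg y2).1)^2 - ((gg x0).1 + (gg x1).1 + (gg x2).1 - (gg y0).1 - (gg y1).1 - (gg y2).1)*((gg x0).2 + (gg x1).2 + (gg x2).2 - (gg y0).2 - (gg y1).2 - (gg y2).2) + ((gg x0).2 + (gg x1).2 + (gg x2).2 - (gg y0).2 - (gg y1).2 - (gg y2).2)^2) = 27) : False := by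
  have hω3 : ω ^ 3 = 1 := hω.pow_eq_one
  have hne : ω - 1 ≠ 0 := sub_ne_zero.2 (hω.ne_one (by norm_num))
  have hrel : ω ^ 2 + ω + 1 = 0 := by
    rcases mul_eq_zero.1 (show (ω - 1) * (ω ^ 2 + ω + 1) = 0 by linear_combination hω3) with h | h
    · exact absurd h hne
    · exact h
  have hfg : ∀ x : ZMod 3, (ω : K) ^ x.val = ((gg x).1 : K) + ((gg x).2 : K) * ω := by
    intro x
    fin_cases x
    · show ω ^ (0 : ℕ) = ((1 : ℤ) : K) + ((0 : ℤ) : K) * ω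
      norm_num
    · show ω ^ (1 : ℕ) = ((0 : ℤ) : K) + ((1 : ℤ) : K) * ω
      norm_num
    · show ω ^ (2 : ℕ) = ((-1 : ℤ) : K) + ((-1 : ℤ) : K) * ω
      push_cast
      linear_combination hrel
  rw [hfg, hfg, hfg, hfg, hfg, hfg] at hd
  refine keyAB h3 ω hrel _ _ ?_ hN
  push_cast
  linear_combination hd

theorem subrank {K : Type*} [Field K] (M : Matrix (Fin 5) (Fin 9) K)
    (r : Fin 3 → Fin 5) (c : Fin 3 → Fin 9) : (M.submatrix r c).rank ≤ M.rank := by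
  have h : M.submatrix r c =
      ((1 : Matrix (Fin 5) (Fin 5) K).submatrix r (Equiv.refl (Fin 5))) * M *
      ((1 : Matrix (Fin 9) (Fin 9) K).submatrix (Equiv.refl (Fin 9)) c) := by
    rw [Matrix.mul_assoc, Matrix.mul_submatrix_one, Matrix.one_submatrix_mul]
    simp
  rw [h]
  exact le_trans (Matrix.rank_mul_le_left _ _) (Matrix.rank_mul_le_right _ _)

theorem rank1_fact {K : Type*} [Field K] (u : Fin 5 → K) (v : Fin 9 → K) :
    (Matrix.of fun i j => u i * v j).rank ≤ 1 := by
  have h : (Matrix.of fun i j => u i * v j) =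
      (Matrix.of fun i (_ : Fin 1) => u i) * (Matrix.of fun (_ : Fin 1) j => v j) := by
    ext i j
    simp [Matrix.mul_apply]
  rw [h]
  refine le_trans (Matrix.rank_mul_le_left _ _) ?_
  simpa using Matrix.rank_le_card_width (Matrix.of fun i (_ : Fin 1) => u i)

/-- If all coordinates of `z` are cube roots of unity, `z_i = ω^{e_i}`, then `CS(z)` has
rank ≤ 2 iff `e₁+e₂+e₃ = e₄+e₅+e₆ = e₇+e₈+e₉` and `e₁+e₄+e₇ = e₂+e₅+e₈` in `ℤ/3`; and,
normalizing `e₁ = 0`, there are exactly `3⁵ = 243` such exponent vectors. -/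
theorem stmt17 {K : Type*} [Field K] (h3 : (3 : K) ≠ 0) (ω : K)
    (hω : IsPrimitiveRoot ω 3) :
    (∀ e : Fin 9 → ZMod 3,
      let w : Fin 9 → K := fun i => ω ^ (e i).val
      let CS : Matrix (Fin 5) (Fin 9) K :=
        !![(w 0)^2, (w 1)^2, (w 2)^2, (w 3)^2, (w 4)^2, (w 5)^2, (w 6)^2, (w 7)^2, (w 8)^2;
           w 1*w 2, w 0*w 2, w 0*w 1, w 4*w 5, w 3*w 5, w 3*w 4, w 7*w 8, w 6*w 8, w 6*w 7;
           w 3*w 6, w 4*w 7, w 5*w 8, w 0*w 6, w 1*w 7, w 2*w 8, w 0*w 3, w 1*w 4, w 2*w 5;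
           w 4*w 8, w 5*w 6, w 3*w 7, w 2*w 7, w 0*w 8, w 1*w 6, w 1*w 5, w 2*w 3, w 0*w 4;
           w 5*w 7, w 3*w 8, w 4*w 6, w 1*w 8, w 2*w 6, w 0*w 7, w 2*w 4, w 0*w 5, w 1*w 3]
      (CS.rank ≤ 2 ↔
        (e 0 + e 1 + e 2 = e 3 + e 4 + e 5 ∧ e 0 + e 1 + e 2 = e 6 + e 7 + e 8 ∧
         e 0 + e 3 + e 6 = e 1 + e 4 + e 7))) ∧
    Fintype.card {e : Fin 9 → ZMod 3 //
      e 0 = 0 ∧ e 0 + e 1 + e 2 = e 3 + e 4 + e 5 ∧ e 0 + e 1 + e 2 = e 6 + e 7 + e 8 ∧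
      e 0 + e 3 + e 6 = e 1 + e 4 + e 7} = 243 := by
  have hω3 : ω ^ 3 = 1 := hω.pow_eq_one
  have hpmod : ∀ a : ℕ, ω ^ a = ω ^ (a % 3) := by
    intro a
    conv_lhs => rw [← Nat.div_add_mod a 3]
    rw [pow_add, pow_mul, hω3, one_pow, one_mul]
  have hw : ∀ x y : ZMod 3, ω ^ x.val * ω ^ y.val = ω ^ (x + y).val := by
    intro x y
    rw [← pow_add, hpmod (x.val + y.val), hpmod (x + y).val]
    congr 1
    rw [ZMod.val_add]
    omega
  have hFadd : ∀ x y : ZMod 3, ω ^ (x + y).val = ω ^ x.val * ω ^ y.val := fun x y => (hw x y).symm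
  have hx : ∀ x : ZMod 3, x + x + x = 0 := by decide
  constructor
  · intro e w CS
    constructor
    · intro hrank
      by_contra hcond
      have hsel := selectMinor (e 0) (e 1) (e 2) (e 3) (e 4) (e 5) (e 6) (e 7) (e 8) hcond
      have hdet : ∀ (r : Fin 3 → Fin 5) (c : Fin 3 → Fin 9), (CS.submatrix r c).det = 0 := by
        intro r c
        by_contra hne
        have hr1 : (CS.submatrix r c).rank = 3 :=
          Matrix.rank_of_isUnit _ ((Matrix.isUnit_iff_isUnit_det _).2 (isUnit_iff_ne_zero.2 hne))
        have hr2 := subrank CS r c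
        omega
      have hd1 := hdet ![1, 2, 3] ![0, 1, 6]
      have hd2 := hdet ![0, 1, 3] ![1, 4, 7]
      rw [Matrix.det_fin_three] at hd1 hd2
      have hd1' : (ω ^ (e 1).val * ω ^ (e 2).val) * (ω ^ (e 4).val * ω ^ (e 7).val) * (ω ^ (e 1).val * ω ^ (e 5).val) - (ω ^ (e 1).val * ω ^ (e 2).val) * (ω ^ (e 0).val * ω ^ (e 3).val) * (ω ^ (e 5).val * ω ^ (e 6).val) - (ω ^ (e 0).val * ω ^ (e 2).val) * (ω ^ (e 3).val * ω ^ (e 6).val) * (ω ^ (e 1).val * ω ^ (e 5).val) + (ω ^ (e 0).val * ω ^ (e 2).val) * (ω ^ (e 0).val * ω ^ (e 3).val) * (ω ^ (e 4).val * ω ^ (e 8).val) + (ω ^ (e 7).val * ω ^ (e 8).val) * (ω ^ (e 3).val * ω ^ (e 6).val) * (ω ^ (e 5).val * ω ^ (e 6).val) - (ω ^ (e 7).val * ω ^ (e 8).val) * (ω ^ (e 4).val * ω ^ (e 7).val) * (ω ^ (e 4).val * ω ^ (e 8).val) = 0 := hd1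
      have hd2' : ((ω ^ (e 1).val) ^ 2) * (ω ^ (e 3).val * ω ^ (e 5).val) * (ω ^ (e 2).val * ω ^ (e 3).val) - ((ω ^ (e 1).val) ^ 2) * (ω ^ (e 6).val * ω ^ (e 8).val) * (ω ^ (e 0).val * ω ^ (e 8).val) - ((ω ^ (e 4).val) ^ 2) * (ω ^ (e 0).val * ω ^ (e 2).val) * (ω ^ (e 2).val * ω ^ (e 3).val) + ((ω ^ (e 4).val) ^ 2) * (ω ^ (e 6).val * ω ^ (e 8).val) * (ω ^ (e 5).val * ω ^ (e 6).val) + ((ω ^ (e 7).val) ^ 2) * (ω ^ (e 0).val * ω ^ (e 2).val) * (ω ^ (e 0).val * ω ^ (e 8).val) - ((ω ^ (e 7).val) ^ 2) * (ω ^ (e 3).val * ω ^ (e 5).val) * (ω ^ (e 5).val * ω ^ (e 6).val) = 0 := hd2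
      have he1 : ω ^ ((e 1 + e 2 + (e 4 + e 7) + (e 1 + e 5)) : ZMod 3).val + ω ^ ((e 0 + e 2 + (e 0 + e 3) + (e 4 + e 8)) : ZMod 3).val + ω ^ ((e 7 + e 8 + (e 3 + e 6) + (e 5 + e 6)) : ZMod 3).val - ω ^ ((e 1 + e 2 + (e 0 + e 3) + (e 5 + e 6)) : ZMod 3).val - ω ^ ((e 0 + e 2 + (e 3 + e 6) + (e 1 + e 5)) : ZMod 3).val - ω ^ ((e 7 + e 8 + (e 4 + e 7) + (e 4 + e 8)) : ZMod 3).val = 0 := by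
        simp only [hFadd]
        linear_combination hd1'
      have he2 : ω ^ ((e 1 + e 1 + (e 3 + e 5) + (e 2 + e 3)) : ZMod 3).val + ω ^ ((e 4 + e 4 + (e 6 + e 8) + (e 5 + e 6)) : ZMod 3).val + ω ^ ((e 7 + e 7 + (e 0 + e 2) + (e 0 + e 8)) : ZMod 3).val - ω ^ ((e 1 + e 1 + (e 6 + e 8) + (e 0 + e 8)) : ZMod 3).val - ω ^ ((e 4 + e 4 + (e 0 + e 2) + (e 2 + e 3)) : ZMod 3).val - ω ^ ((e 7 + e 7 + (e 3 + e 5) + (e 5 + e 6)) : ZMod 3).val = 0 := by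
        simp only [hFadd]
        linear_combination hd2'
      rcases hsel with hN | hN
      · exact keydet h3 ω hω _ _ _ _ _ _ he1 hN
      · exact keydet h3 ω hω _ _ _ _ _ _ he2 hN
    · rintro ⟨h1, h2, h3c⟩
      have hCS : CS = Matrix.of fun i j =>
          (fun i' => ω ^ ((![0, e 0 + e 1 + e 2, e 0 + e 3 + e 6, e 0 + e 4 + e 8,
            e 0 + e 5 + e 7] : Fin 5 → ZMod 3) i').val) i *
          (fun j' => ω ^ (2 * e j' : ZMod 3).val) j := by
        ext i j
        fin_cases i <;> fin_cases j
        · show (ω ^ (e 0).val) ^ 2 = ω ^ ((0 : ZMod 3)).val * ω ^ (2 * e 0 : ZMod 3).val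
          rw [sq, hw, hw]
          exact congrArg (fun t : ZMod 3 => ω ^ t.val) (by ring)
        · show (ω ^ (e 1).val) ^ 2 = ω ^ ((0 : ZMod 3)).val * ω ^ (2 * e 1 : ZMod 3).val
          rw [sq, hw, hw]
          exact congrArg (fun t : ZMod 3 => ω ^ t.val) (by ring)
        · show (ω ^ (e 2).val) ^ 2 = ω ^ ((0 : ZMod 3)).val * ω ^ (2 * e 2 : ZMod 3).val
          rw [sq, hw, hw]
          exact congrArg (fun t : ZMod 3 => ω ^ t.val) (by ring)
        · show (ω ^ (e 3).val) ^ 2 = ω ^ ((0 : ZMod 3)).val * ω ^ (2 * e 3 : ZMod 3).val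
          rw [sq, hw, hw]
          exact congrArg (fun t : ZMod 3 => ω ^ t.val) (by ring)
        · show (ω ^ (e 4).val) ^ 2 = ω ^ ((0 : ZMod 3)).val * ω ^ (2 * e 4 : ZMod 3).val
          rw [sq, hw, hw]
          exact congrArg (fun t : ZMod 3 => ω ^ t.val) (by ring)
        · show (ω ^ (e 5).val) ^ 2 = ω ^ ((0 : ZMod 3)).val * ω ^ (2 * e 5 : ZMod 3).val
          rw [sq, hw, hw]
          exact congrArg (fun t : ZMod 3 => ω ^ t.val) (by ring)
        · show (ω ^ (e 6).val) ^ 2 = ω ^ ((0 : ZMod 3)).val * ω ^ (2 * e 6 : ZMod 3).val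
          rw [sq, hw, hw]
          exact congrArg (fun t : ZMod 3 => ω ^ t.val) (by ring)
        · show (ω ^ (e 7).val) ^ 2 = ω ^ ((0 : ZMod 3)).val * ω ^ (2 * e 7 : ZMod 3).val
          rw [sq, hw, hw]
          exact congrArg (fun t : ZMod 3 => ω ^ t.val) (by ring)
        · show (ω ^ (e 8).val) ^ 2 = ω ^ ((0 : ZMod 3)).val * ω ^ (2 * e 8 : ZMod 3).val
          rw [sq, hw, hw]
          exact congrArg (fun t : ZMod 3 => ω ^ t.val) (by ring)
        · show ω ^ (e 1).val * ω ^ (e 2).val = ω ^ (e 0 + e 1 + e 2).val * ω ^ (2 * e 0 : ZMod 3).val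
          rw [hw, hw]
          exact congrArg (fun t : ZMod 3 => ω ^ t.val) (by linear_combination - hx (e 0))
        · show ω ^ (e 0).val * ω ^ (e 2).val = ω ^ (e 0 + e 1 + e 2).val * ω ^ (2 * e 1 : ZMod 3).val
          rw [hw, hw]
          exact congrArg (fun t : ZMod 3 => ω ^ t.val) (by linear_combination - hx (e 1))
        · show ω ^ (e 0).val * ω ^ (e 1).val = ω ^ (e 0 + e 1 + e 2).val * ω ^ (2 * e 2 : ZMod 3).val
          rw [hw, hw]
          exact congrArg (fun t : ZMod 3 => ω ^ t.val) (by linear_combination - hx (e 2))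
        · show ω ^ (e 4).val * ω ^ (e 5).val = ω ^ (e 0 + e 1 + e 2).val * ω ^ (2 * e 3 : ZMod 3).val
          rw [hw, hw]
          exact congrArg (fun t : ZMod 3 => ω ^ t.val) (by linear_combination - h1 - hx (e 3))
        · show ω ^ (e 3).val * ω ^ (e 5).val = ω ^ (e 0 + e 1 + e 2).val * ω ^ (2 * e 4 : ZMod 3).val
          rw [hw, hw]
          exact congrArg (fun t : ZMod 3 => ω ^ t.val) (by linear_combination - h1 - hx (e 4))
        · show ω ^ (e 3).val * ω ^ (e 4).val = ω ^ (e 0 + e 1 + e 2).val * ω ^ (2 * e 5 : ZMod 3).val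
          rw [hw, hw]
          exact congrArg (fun t : ZMod 3 => ω ^ t.val) (by linear_combination - h1 - hx (e 5))
        · show ω ^ (e 7).val * ω ^ (e 8).val = ω ^ (e 0 + e 1 + e 2).val * ω ^ (2 * e 6 : ZMod 3).val
          rw [hw, hw]
          exact congrArg (fun t : ZMod 3 => ω ^ t.val) (by linear_combination - h2 - hx (e 6))
        · show ω ^ (e 6).val * ω ^ (e 8).val = ω ^ (e 0 + e 1 + e 2).val * ω ^ (2 * e 7 : ZMod 3).val
          rw [hw, hw]
          exact congrArg (fun t : ZMod 3 => ω ^ t.val) (by linear_combination - h2 - hx (e 7))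
        · show ω ^ (e 6).val * ω ^ (e 7).val = ω ^ (e 0 + e 1 + e 2).val * ω ^ (2 * e 8 : ZMod 3).val
          rw [hw, hw]
          exact congrArg (fun t : ZMod 3 => ω ^ t.val) (by linear_combination - h2 - hx (e 8))
        · show ω ^ (e 3).val * ω ^ (e 6).val = ω ^ (e 0 + e 3 + e 6).val * ω ^ (2 * e 0 : ZMod 3).val
          rw [hw, hw]
          exact congrArg (fun t : ZMod 3 => ω ^ t.val) (by linear_combination - hx (e 0))
        · show ω ^ (e 4).val * ω ^ (e 7).val = ω ^ (e 0 + e 3 + e 6).val * ω ^ (2 * e 1 : ZMod 3).val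
          rw [hw, hw]
          exact congrArg (fun t : ZMod 3 => ω ^ t.val) (by linear_combination - h3c - hx (e 1))
        · show ω ^ (e 5).val * ω ^ (e 8).val = ω ^ (e 0 + e 3 + e 6).val * ω ^ (2 * e 2 : ZMod 3).val
          rw [hw, hw]
          exact congrArg (fun t : ZMod 3 => ω ^ t.val) (by linear_combination - h1 - h2 + h3c + hx (e 1) - hx (e 3) - hx (e 6))
        · show ω ^ (e 0).val * ω ^ (e 6).val = ω ^ (e 0 + e 3 + e 6).val * ω ^ (2 * e 3 : ZMod 3).val
          rw [hw, hw]
          exact congrArg (fun t : ZMod 3 => ω ^ t.val) (by linear_combination - hx (e 3))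
        · show ω ^ (e 1).val * ω ^ (e 7).val = ω ^ (e 0 + e 3 + e 6).val * ω ^ (2 * e 4 : ZMod 3).val
          rw [hw, hw]
          exact congrArg (fun t : ZMod 3 => ω ^ t.val) (by linear_combination - h3c - hx (e 4))
        · show ω ^ (e 2).val * ω ^ (e 8).val = ω ^ (e 0 + e 3 + e 6).val * ω ^ (2 * e 5 : ZMod 3).val
          rw [hw, hw]
          exact congrArg (fun t : ZMod 3 => ω ^ t.val) (by linear_combination - h1 - h2 + h3c + hx (e 1) + hx (e 2) - hx (e 3) - hx (e 5) - hx (e 6))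
        · show ω ^ (e 0).val * ω ^ (e 3).val = ω ^ (e 0 + e 3 + e 6).val * ω ^ (2 * e 6 : ZMod 3).val
          rw [hw, hw]
          exact congrArg (fun t : ZMod 3 => ω ^ t.val) (by linear_combination - hx (e 6))
        · show ω ^ (e 1).val * ω ^ (e 4).val = ω ^ (e 0 + e 3 + e 6).val * ω ^ (2 * e 7 : ZMod 3).val
          rw [hw, hw]
          exact congrArg (fun t : ZMod 3 => ω ^ t.val) (by linear_combination - h3c - hx (e 7))
        · show ω ^ (e 2).val * ω ^ (e 5).val = ω ^ (e 0 + e 3 + e 6).val * ω ^ (2 * e 8 : ZMod 3).val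
          rw [hw, hw]
          exact congrArg (fun t : ZMod 3 => ω ^ t.val) (by linear_combination - h1 - h2 + h3c + hx (e 1) + hx (e 2) - hx (e 3) - hx (e 6) - hx (e 8))
        · show ω ^ (e 4).val * ω ^ (e 8).val = ω ^ (e 0 + e 4 + e 8).val * ω ^ (2 * e 0 : ZMod 3).val
          rw [hw, hw]
          exact congrArg (fun t : ZMod 3 => ω ^ t.val) (by linear_combination - hx (e 0))
        · show ω ^ (e 5).val * ω ^ (e 6).val = ω ^ (e 0 + e 4 + e 8).val * ω ^ (2 * e 1 : ZMod 3).val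
          rw [hw, hw]
          exact congrArg (fun t : ZMod 3 => ω ^ t.val) (by linear_combination - h1 + h2 - h3c - hx (e 1) - hx (e 4) + hx (e 6))
        · show ω ^ (e 3).val * ω ^ (e 7).val = ω ^ (e 0 + e 4 + e 8).val * ω ^ (2 * e 2 : ZMod 3).val
          rw [hw, hw]
          exact congrArg (fun t : ZMod 3 => ω ^ t.val) (by linear_combination h2 + h3c - hx (e 0) - hx (e 2) + hx (e 7))
        · show ω ^ (e 2).val * ω ^ (e 7).val = ω ^ (e 0 + e 4 + e 8).val * ω ^ (2 * e 3 : ZMod 3).val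
          rw [hw, hw]
          exact congrArg (fun t : ZMod 3 => ω ^ t.val) (by linear_combination h2 + h3c - hx (e 0) - hx (e 3) + hx (e 7))
        · show ω ^ (e 0).val * ω ^ (e 8).val = ω ^ (e 0 + e 4 + e 8).val * ω ^ (2 * e 4 : ZMod 3).val
          rw [hw, hw]
          exact congrArg (fun t : ZMod 3 => ω ^ t.val) (by linear_combination - hx (e 4))
        · show ω ^ (e 1).val * ω ^ (e 6).val = ω ^ (e 0 + e 4 + e 8).val * ω ^ (2 * e 5 : ZMod 3).val
          rw [hw, hw]
          exact congrArg (fun t : ZMod 3 => ω ^ t.val) (by linear_combination - h1 + h2 - h3c - hx (e 4) - hx (e 5) + hx (e 6))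
        · show ω ^ (e 1).val * ω ^ (e 5).val = ω ^ (e 0 + e 4 + e 8).val * ω ^ (2 * e 6 : ZMod 3).val
          rw [hw, hw]
          exact congrArg (fun t : ZMod 3 => ω ^ t.val) (by linear_combination - h1 + h2 - h3c - hx (e 4))
        · show ω ^ (e 2).val * ω ^ (e 3).val = ω ^ (e 0 + e 4 + e 8).val * ω ^ (2 * e 7 : ZMod 3).val
          rw [hw, hw]
          exact congrArg (fun t : ZMod 3 => ω ^ t.val) (by linear_combination h2 + h3c - hx (e 0))
        · show ω ^ (e 0).val * ω ^ (e 4).val = ω ^ (e 0 + e 4 + e 8).val * ω ^ (2 * e 8 : ZMod 3).val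
          rw [hw, hw]
          exact congrArg (fun t : ZMod 3 => ω ^ t.val) (by linear_combination - hx (e 8))
        · show ω ^ (e 5).val * ω ^ (e 7).val = ω ^ (e 0 + e 5 + e 7).val * ω ^ (2 * e 0 : ZMod 3).val
          rw [hw, hw]
          exact congrArg (fun t : ZMod 3 => ω ^ t.val) (by linear_combination - hx (e 0))
        · show ω ^ (e 3).val * ω ^ (e 8).val = ω ^ (e 0 + e 5 + e 7).val * ω ^ (2 * e 1 : ZMod 3).val
          rw [hw, hw]
          exact congrArg (fun t : ZMod 3 => ω ^ t.val) (by linear_combination h1 - h2 - h3c - hx (e 1) + hx (e 3) - hx (e 7))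
        · show ω ^ (e 4).val * ω ^ (e 6).val = ω ^ (e 0 + e 5 + e 7).val * ω ^ (2 * e 2 : ZMod 3).val
          rw [hw, hw]
          exact congrArg (fun t : ZMod 3 => ω ^ t.val) (by linear_combination h1 + h3c - hx (e 0) - hx (e 2) + hx (e 4))
        · show ω ^ (e 1).val * ω ^ (e 8).val = ω ^ (e 0 + e 5 + e 7).val * ω ^ (2 * e 3 : ZMod 3).val
          rw [hw, hw]
          exact congrArg (fun t : ZMod 3 => ω ^ t.val) (by linear_combination h1 - h2 - h3c - hx (e 7))
        · show ω ^ (e 2).val * ω ^ (e 6).val = ω ^ (e 0 + e 5 + e 7).val * ω ^ (2 * e 4 : ZMod 3).val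
          rw [hw, hw]
          exact congrArg (fun t : ZMod 3 => ω ^ t.val) (by linear_combination h1 + h3c - hx (e 0))
        · show ω ^ (e 0).val * ω ^ (e 7).val = ω ^ (e 0 + e 5 + e 7).val * ω ^ (2 * e 5 : ZMod 3).val
          rw [hw, hw]
          exact congrArg (fun t : ZMod 3 => ω ^ t.val) (by linear_combination - hx (e 5))
        · show ω ^ (e 2).val * ω ^ (e 4).val = ω ^ (e 0 + e 5 + e 7).val * ω ^ (2 * e 6 : ZMod 3).val
          rw [hw, hw]
          exact congrArg (fun t : ZMod 3 => ω ^ t.val) (by linear_combination h1 + h3c - hx (e 0) + hx (e 4) - hx (e 6))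
        · show ω ^ (e 0).val * ω ^ (e 5).val = ω ^ (e 0 + e 5 + e 7).val * ω ^ (2 * e 7 : ZMod 3).val
          rw [hw, hw]
          exact congrArg (fun t : ZMod 3 => ω ^ t.val) (by linear_combination - hx (e 7))
        · show ω ^ (e 1).val * ω ^ (e 3).val = ω ^ (e 0 + e 5 + e 7).val * ω ^ (2 * e 8 : ZMod 3).val
          rw [hw, hw]
          exact congrArg (fun t : ZMod 3 => ω ^ t.val) (by linear_combination h1 - h2 - h3c + hx (e 3) - hx (e 7) - hx (e 8))
      rw [hCS]
      exact le_trans (rank1_fact _ _) (by norm_num)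
  · have eqv : {e : Fin 9 → ZMod 3 //
        e 0 = 0 ∧ e 0 + e 1 + e 2 = e 3 + e 4 + e 5 ∧ e 0 + e 1 + e 2 = e 6 + e 7 + e 8 ∧
        e 0 + e 3 + e 6 = e 1 + e 4 + e 7} ≃ (Fin 5 → ZMod 3) := {
      toFun := fun x => ![x.1 1, x.1 2, x.1 3, x.1 4, x.1 6]
      invFun := fun v => ⟨![0, v 0, v 1, v 2, v 3, v 0 + v 1 - v 2 - v 3, v 4,
          v 2 + v 4 - v 0 - v 3, v 0 + v 1 - v 4 - (v 2 + v 4 - v 0 - v 3)], by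
        refine ⟨rfl, ?_, ?_, ?_⟩
        · show (0 : ZMod 3) + v 0 + v 1 = v 2 + v 3 + (v 0 + v 1 - v 2 - v 3); ring
        · show (0 : ZMod 3) + v 0 + v 1 =
            v 4 + (v 2 + v 4 - v 0 - v 3) + (v 0 + v 1 - v 4 - (v 2 + v 4 - v 0 - v 3)); ring
        · show (0 : ZMod 3) + v 2 + v 4 = v 0 + v 3 + (v 2 + v 4 - v 0 - v 3); ring⟩
      left_inv := fun x => by
        obtain ⟨f, h0, hc1, hc2, hc3⟩ := x
        apply Subtype.ext
        funext i
        fin_cases i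
        · exact h0.symm
        · rfl
        · rfl
        · rfl
        · rfl
        · show f 1 + f 2 - f 3 - f 4 = f 5
          linear_combination hc1 - h0
        · rfl
        · show f 3 + f 6 - f 1 - f 4 = f 7
          linear_combination hc3 - h0
        · show f 1 + f 2 - f 6 - (f 3 + f 6 - f 1 - f 4) = f 8
          linear_combination hc2 - hc3
      right_inv := fun v => by
        funext i
        fin_cases i <;> rfl }
    rw [Fintype.card_congr eqv]
    rw [Fintype.card_fun]
    simp [ZMod.card]
end

section
/- The square of the quartic G = z₁z₂z₃(z₄³+z₅³+z₆³−z₇³−z₈³−z₉³) + z₄z₅z₆(−z₁³−z₂³−z₃³+z₇³+z₈³+z₉³) + z₇z₈z₉(z₁³+z₂³+z₃³−z₄³−z₅³−z₆³) lies in the ideal generated by the 5×5 (maximal) minors of the matrix CS(z) in K[z₁,…,z₉]. -/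
open MvPolynomial

set_option maxHeartbeats 4000000
set_option maxRecDepth 8000

set_option maxHeartbeats 4000000 in
theorem det_fin_four' {R : Type*} [CommRing R] (A : Matrix (Fin 4) (Fin 4) R) :
    A.det = A 0 0*A 1 1*A 2 2*A 3 3
      - A 0 0*A 1 1*A 2 3*A 3 2
      - A 0 0*A 1 2*A 2 1*A 3 3
      + A 0 0*A 1 2*A 2 3*A 3 1
      + A 0 0*A 1 3*A 2 1*A 3 2
      - A 0 0*A 1 3*A 2 2*A 3 1
      - A 0 1*A 1 0*A 2 2*A 3 3
      + A 0 1*A 1 0*A 2 3*A 3 2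
      + A 0 1*A 1 2*A 2 0*A 3 3
      - A 0 1*A 1 2*A 2 3*A 3 0
      - A 0 1*A 1 3*A 2 0*A 3 2
      + A 0 1*A 1 3*A 2 2*A 3 0
      + A 0 2*A 1 0*A 2 1*A 3 3
      - A 0 2*A 1 0*A 2 3*A 3 1
      - A 0 2*A 1 1*A 2 0*A 3 3
      + A 0 2*A 1 1*A 2 3*A 3 0
      + A 0 2*A 1 3*A 2 0*A 3 1
      - A 0 2*A 1 3*A 2 1*A 3 0
      - A 0 3*A 1 0*A 2 1*A 3 2
      + A 0 3*A 1 0*A 2 2*A 3 1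
      + A 0 3*A 1 1*A 2 0*A 3 2
      - A 0 3*A 1 1*A 2 2*A 3 0
      - A 0 3*A 1 2*A 2 0*A 3 1
      + A 0 3*A 1 2*A 2 1*A 3 0 := by
  rw [Matrix.det_succ_row_zero]
  simp [Fin.sum_univ_succ, Matrix.det_fin_three, Matrix.submatrix_apply, Fin.succAbove]
  ring

set_option maxHeartbeats 4000000 in
theorem det_fin_five' {R : Type*} [CommRing R] (A : Matrix (Fin 5) (Fin 5) R) :
    A.det = A 0 0*A 1 1*A 2 2*A 3 3*A 4 4
      - A 0 0*A 1 1*A 2 2*A 3 4*A 4 3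
      - A 0 0*A 1 1*A 2 3*A 3 2*A 4 4
      + A 0 0*A 1 1*A 2 3*A 3 4*A 4 2
      + A 0 0*A 1 1*A 2 4*A 3 2*A 4 3
      - A 0 0*A 1 1*A 2 4*A 3 3*A 4 2
      - A 0 0*A 1 2*A 2 1*A 3 3*A 4 4
      + A 0 0*A 1 2*A 2 1*A 3 4*A 4 3
      + A 0 0*A 1 2*A 2 3*A 3 1*A 4 4
      - A 0 0*A 1 2*A 2 3*A 3 4*A 4 1
      - A 0 0*A 1 2*A 2 4*A 3 1*A 4 3
      + A 0 0*A 1 2*A 2 4*A 3 3*A 4 1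
      + A 0 0*A 1 3*A 2 1*A 3 2*A 4 4
      - A 0 0*A 1 3*A 2 1*A 3 4*A 4 2
      - A 0 0*A 1 3*A 2 2*A 3 1*A 4 4
      + A 0 0*A 1 3*A 2 2*A 3 4*A 4 1
      + A 0 0*A 1 3*A 2 4*A 3 1*A 4 2
      - A 0 0*A 1 3*A 2 4*A 3 2*A 4 1
      - A 0 0*A 1 4*A 2 1*A 3 2*A 4 3
      + A 0 0*A 1 4*A 2 1*A 3 3*A 4 2
      + A 0 0*A 1 4*A 2 2*A 3 1*A 4 3
      - A 0 0*A 1 4*A 2 2*A 3 3*A 4 1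
      - A 0 0*A 1 4*A 2 3*A 3 1*A 4 2
      + A 0 0*A 1 4*A 2 3*A 3 2*A 4 1
      - A 0 1*A 1 0*A 2 2*A 3 3*A 4 4
      + A 0 1*A 1 0*A 2 2*A 3 4*A 4 3
      + A 0 1*A 1 0*A 2 3*A 3 2*A 4 4
      - A 0 1*A 1 0*A 2 3*A 3 4*A 4 2
      - A 0 1*A 1 0*A 2 4*A 3 2*A 4 3
      + A 0 1*A 1 0*A 2 4*A 3 3*A 4 2
      + A 0 1*A 1 2*A 2 0*A 3 3*A 4 4
      - A 0 1*A 1 2*A 2 0*A 3 4*A 4 3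
      - A 0 1*A 1 2*A 2 3*A 3 0*A 4 4
      + A 0 1*A 1 2*A 2 3*A 3 4*A 4 0
      + A 0 1*A 1 2*A 2 4*A 3 0*A 4 3
      - A 0 1*A 1 2*A 2 4*A 3 3*A 4 0
      - A 0 1*A 1 3*A 2 0*A 3 2*A 4 4
      + A 0 1*A 1 3*A 2 0*A 3 4*A 4 2
      + A 0 1*A 1 3*A 2 2*A 3 0*A 4 4
      - A 0 1*A 1 3*A 2 2*A 3 4*A 4 0
      - A 0 1*A 1 3*A 2 4*A 3 0*A 4 2
      + A 0 1*A 1 3*A 2 4*A 3 2*A 4 0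
      + A 0 1*A 1 4*A 2 0*A 3 2*A 4 3
      - A 0 1*A 1 4*A 2 0*A 3 3*A 4 2
      - A 0 1*A 1 4*A 2 2*A 3 0*A 4 3
      + A 0 1*A 1 4*A 2 2*A 3 3*A 4 0
      + A 0 1*A 1 4*A 2 3*A 3 0*A 4 2
      - A 0 1*A 1 4*A 2 3*A 3 2*A 4 0
      + A 0 2*A 1 0*A 2 1*A 3 3*A 4 4
      - A 0 2*A 1 0*A 2 1*A 3 4*A 4 3
      - A 0 2*A 1 0*A 2 3*A 3 1*A 4 4
      + A 0 2*A 1 0*A 2 3*A 3 4*A 4 1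
      + A 0 2*A 1 0*A 2 4*A 3 1*A 4 3
      - A 0 2*A 1 0*A 2 4*A 3 3*A 4 1
      - A 0 2*A 1 1*A 2 0*A 3 3*A 4 4
      + A 0 2*A 1 1*A 2 0*A 3 4*A 4 3
      + A 0 2*A 1 1*A 2 3*A 3 0*A 4 4
      - A 0 2*A 1 1*A 2 3*A 3 4*A 4 0
      - A 0 2*A 1 1*A 2 4*A 3 0*A 4 3
      + A 0 2*A 1 1*A 2 4*A 3 3*A 4 0
      + A 0 2*A 1 3*A 2 0*A 3 1*A 4 4
      - A 0 2*A 1 3*A 2 0*A 3 4*A 4 1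
      - A 0 2*A 1 3*A 2 1*A 3 0*A 4 4
      + A 0 2*A 1 3*A 2 1*A 3 4*A 4 0
      + A 0 2*A 1 3*A 2 4*A 3 0*A 4 1
      - A 0 2*A 1 3*A 2 4*A 3 1*A 4 0
      - A 0 2*A 1 4*A 2 0*A 3 1*A 4 3
      + A 0 2*A 1 4*A 2 0*A 3 3*A 4 1
      + A 0 2*A 1 4*A 2 1*A 3 0*A 4 3
      - A 0 2*A 1 4*A 2 1*A 3 3*A 4 0
      - A 0 2*A 1 4*A 2 3*A 3 0*A 4 1
      + A 0 2*A 1 4*A 2 3*A 3 1*A 4 0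
      - A 0 3*A 1 0*A 2 1*A 3 2*A 4 4
      + A 0 3*A 1 0*A 2 1*A 3 4*A 4 2
      + A 0 3*A 1 0*A 2 2*A 3 1*A 4 4
      - A 0 3*A 1 0*A 2 2*A 3 4*A 4 1
      - A 0 3*A 1 0*A 2 4*A 3 1*A 4 2
      + A 0 3*A 1 0*A 2 4*A 3 2*A 4 1
      + A 0 3*A 1 1*A 2 0*A 3 2*A 4 4
      - A 0 3*A 1 1*A 2 0*A 3 4*A 4 2
      - A 0 3*A 1 1*A 2 2*A 3 0*A 4 4
      + A 0 3*A 1 1*A 2 2*A 3 4*A 4 0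
      + A 0 3*A 1 1*A 2 4*A 3 0*A 4 2
      - A 0 3*A 1 1*A 2 4*A 3 2*A 4 0
      - A 0 3*A 1 2*A 2 0*A 3 1*A 4 4
      + A 0 3*A 1 2*A 2 0*A 3 4*A 4 1
      + A 0 3*A 1 2*A 2 1*A 3 0*A 4 4
      - A 0 3*A 1 2*A 2 1*A 3 4*A 4 0
      - A 0 3*A 1 2*A 2 4*A 3 0*A 4 1
      + A 0 3*A 1 2*A 2 4*A 3 1*A 4 0
      + A 0 3*A 1 4*A 2 0*A 3 1*A 4 2
      - A 0 3*A 1 4*A 2 0*A 3 2*A 4 1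
      - A 0 3*A 1 4*A 2 1*A 3 0*A 4 2
      + A 0 3*A 1 4*A 2 1*A 3 2*A 4 0
      + A 0 3*A 1 4*A 2 2*A 3 0*A 4 1
      - A 0 3*A 1 4*A 2 2*A 3 1*A 4 0
      + A 0 4*A 1 0*A 2 1*A 3 2*A 4 3
      - A 0 4*A 1 0*A 2 1*A 3 3*A 4 2
      - A 0 4*A 1 0*A 2 2*A 3 1*A 4 3
      + A 0 4*A 1 0*A 2 2*A 3 3*A 4 1
      + A 0 4*A 1 0*A 2 3*A 3 1*A 4 2
      - A 0 4*A 1 0*A 2 3*A 3 2*A 4 1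
      - A 0 4*A 1 1*A 2 0*A 3 2*A 4 3
      + A 0 4*A 1 1*A 2 0*A 3 3*A 4 2
      + A 0 4*A 1 1*A 2 2*A 3 0*A 4 3
      - A 0 4*A 1 1*A 2 2*A 3 3*A 4 0
      - A 0 4*A 1 1*A 2 3*A 3 0*A 4 2
      + A 0 4*A 1 1*A 2 3*A 3 2*A 4 0
      + A 0 4*A 1 2*A 2 0*A 3 1*A 4 3
      - A 0 4*A 1 2*A 2 0*A 3 3*A 4 1
      - A 0 4*A 1 2*A 2 1*A 3 0*A 4 3
      + A 0 4*A 1 2*A 2 1*A 3 3*A 4 0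
      + A 0 4*A 1 2*A 2 3*A 3 0*A 4 1
      - A 0 4*A 1 2*A 2 3*A 3 1*A 4 0
      - A 0 4*A 1 3*A 2 0*A 3 1*A 4 2
      + A 0 4*A 1 3*A 2 0*A 3 2*A 4 1
      + A 0 4*A 1 3*A 2 1*A 3 0*A 4 2
      - A 0 4*A 1 3*A 2 1*A 3 2*A 4 0
      - A 0 4*A 1 3*A 2 2*A 3 0*A 4 1
      + A 0 4*A 1 3*A 2 2*A 3 1*A 4 0 := by
  rw [Matrix.det_succ_row_zero]
  simp only [Fin.sum_univ_succ, Fin.sum_univ_zero, Matrix.submatrix_apply,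
    show (Fin.succ 0 : Fin 2) = 1 by decide,
    show (Fin.succ 0 : Fin 3) = 1 by decide,
    show (Fin.succ 1 : Fin 3) = 2 by decide,
    show (Fin.succ 0 : Fin 4) = 1 by decide,
    show (Fin.succ 1 : Fin 4) = 2 by decide,
    show (Fin.succ 2 : Fin 4) = 3 by decide,
    show (Fin.succ 0 : Fin 5) = 1 by decide,
    show (Fin.succ 1 : Fin 5) = 2 by decide,
    show (Fin.succ 2 : Fin 5) = 3 by decide,
    show (Fin.succ 3 : Fin 5) = 4 by decide,
    show Fin.succAbove (0:Fin 5) 0 = 1 by decide,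
    show Fin.succAbove (0:Fin 5) 1 = 2 by decide,
    show Fin.succAbove (0:Fin 5) 2 = 3 by decide,
    show Fin.succAbove (0:Fin 5) 3 = 4 by decide,
    show Fin.succAbove (1:Fin 5) 0 = 0 by decide,
    show Fin.succAbove (1:Fin 5) 1 = 2 by decide,
    show Fin.succAbove (1:Fin 5) 2 = 3 by decide,
    show Fin.succAbove (1:Fin 5) 3 = 4 by decide,
    show Fin.succAbove (2:Fin 5) 0 = 0 by decide,
    show Fin.succAbove (2:Fin 5) 1 = 1 by decide,
    show Fin.succAbove (2:Fin 5) 2 = 3 by decide,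
    show Fin.succAbove (2:Fin 5) 3 = 4 by decide,
    show Fin.succAbove (3:Fin 5) 0 = 0 by decide,
    show Fin.succAbove (3:Fin 5) 1 = 1 by decide,
    show Fin.succAbove (3:Fin 5) 2 = 2 by decide,
    show Fin.succAbove (3:Fin 5) 3 = 4 by decide,
    show Fin.succAbove (4:Fin 5) 0 = 0 by decide,
    show Fin.succAbove (4:Fin 5) 1 = 1 by decide,
    show Fin.succAbove (4:Fin 5) 2 = 2 by decide,
    show Fin.succAbove (4:Fin 5) 3 = 3 by decide,
    show ((0:Fin 5):Nat) = 0 by decide,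
    show ((1:Fin 5):Nat) = 1 by decide,
    show ((2:Fin 5):Nat) = 2 by decide,
    show ((3:Fin 5):Nat) = 3 by decide,
    show ((4:Fin 5):Nat) = 4 by decide,
    det_fin_four', Fin.val_zero, pow_zero, one_mul, neg_mul, neg_neg, add_zero]
  norm_num
  ring


private theorem det_fin_five_of {R : Type*} [CommRing R] (a00 a01 a02 a03 a04 a10 a11 a12 a13 a14 a20 a21 a22 a23 a24 a30 a31 a32 a33 a34 a40 a41 a42 a43 a44 : R) :
    (!![a00, a01, a02, a03, a04;
       a10, a11, a12, a13, a14;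
       a20, a21, a22, a23, a24;
       a30, a31, a32, a33, a34;
       a40, a41, a42, a43, a44]).det = a00*a11*a22*a33*a44
      - a00*a11*a22*a34*a43
      - a00*a11*a23*a32*a44
      + a00*a11*a23*a34*a42
      + a00*a11*a24*a32*a43
      - a00*a11*a24*a33*a42
      - a00*a12*a21*a33*a44
      + a00*a12*a21*a34*a43
      + a00*a12*a23*a31*a44
      - a00*a12*a23*a34*a41
      - a00*a12*a24*a31*a43
      + a00*a12*a24*a33*a41
      + a00*a13*a21*a32*a44
      - a00*a13*a21*a34*a42
      - a00*a13*a22*a31*a44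
      + a00*a13*a22*a34*a41
      + a00*a13*a24*a31*a42
      - a00*a13*a24*a32*a41
      - a00*a14*a21*a32*a43
      + a00*a14*a21*a33*a42
      + a00*a14*a22*a31*a43
      - a00*a14*a22*a33*a41
      - a00*a14*a23*a31*a42
      + a00*a14*a23*a32*a41
      - a01*a10*a22*a33*a44
      + a01*a10*a22*a34*a43
      + a01*a10*a23*a32*a44
      - a01*a10*a23*a34*a42
      - a01*a10*a24*a32*a43
      + a01*a10*a24*a33*a42
      + a01*a12*a20*a33*a44
      - a01*a12*a20*a34*a43
      - a01*a12*a23*a30*a44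
      + a01*a12*a23*a34*a40
      + a01*a12*a24*a30*a43
      - a01*a12*a24*a33*a40
      - a01*a13*a20*a32*a44
      + a01*a13*a20*a34*a42
      + a01*a13*a22*a30*a44
      - a01*a13*a22*a34*a40
      - a01*a13*a24*a30*a42
      + a01*a13*a24*a32*a40
      + a01*a14*a20*a32*a43
      - a01*a14*a20*a33*a42
      - a01*a14*a22*a30*a43
      + a01*a14*a22*a33*a40
      + a01*a14*a23*a30*a42
      - a01*a14*a23*a32*a40
      + a02*a10*a21*a33*a44
      - a02*a10*a21*a34*a43
      - a02*a10*a23*a31*a44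
      + a02*a10*a23*a34*a41
      + a02*a10*a24*a31*a43
      - a02*a10*a24*a33*a41
      - a02*a11*a20*a33*a44
      + a02*a11*a20*a34*a43
      + a02*a11*a23*a30*a44
      - a02*a11*a23*a34*a40
      - a02*a11*a24*a30*a43
      + a02*a11*a24*a33*a40
      + a02*a13*a20*a31*a44
      - a02*a13*a20*a34*a41
      - a02*a13*a21*a30*a44
      + a02*a13*a21*a34*a40
      + a02*a13*a24*a30*a41
      - a02*a13*a24*a31*a40
      - a02*a14*a20*a31*a43
      + a02*a14*a20*a33*a41
      + a02*a14*a21*a30*a43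
      - a02*a14*a21*a33*a40
      - a02*a14*a23*a30*a41
      + a02*a14*a23*a31*a40
      - a03*a10*a21*a32*a44
      + a03*a10*a21*a34*a42
      + a03*a10*a22*a31*a44
      - a03*a10*a22*a34*a41
      - a03*a10*a24*a31*a42
      + a03*a10*a24*a32*a41
      + a03*a11*a20*a32*a44
      - a03*a11*a20*a34*a42
      - a03*a11*a22*a30*a44
      + a03*a11*a22*a34*a40
      + a03*a11*a24*a30*a42
      - a03*a11*a24*a32*a40
      - a03*a12*a20*a31*a44
      + a03*a12*a20*a34*a41
      + a03*a12*a21*a30*a44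
      - a03*a12*a21*a34*a40
      - a03*a12*a24*a30*a41
      + a03*a12*a24*a31*a40
      + a03*a14*a20*a31*a42
      - a03*a14*a20*a32*a41
      - a03*a14*a21*a30*a42
      + a03*a14*a21*a32*a40
      + a03*a14*a22*a30*a41
      - a03*a14*a22*a31*a40
      + a04*a10*a21*a32*a43
      - a04*a10*a21*a33*a42
      - a04*a10*a22*a31*a43
      + a04*a10*a22*a33*a41
      + a04*a10*a23*a31*a42
      - a04*a10*a23*a32*a41
      - a04*a11*a20*a32*a43
      + a04*a11*a20*a33*a42
      + a04*a11*a22*a30*a43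
      - a04*a11*a22*a33*a40
      - a04*a11*a23*a30*a42
      + a04*a11*a23*a32*a40
      + a04*a12*a20*a31*a43
      - a04*a12*a20*a33*a41
      - a04*a12*a21*a30*a43
      + a04*a12*a21*a33*a40
      + a04*a12*a23*a30*a41
      - a04*a12*a23*a31*a40
      - a04*a13*a20*a31*a42
      + a04*a13*a20*a32*a41
      + a04*a13*a21*a30*a42
      - a04*a13*a21*a32*a40
      - a04*a13*a22*a30*a41
      + a04*a13*a22*a31*a40 := by
  rw [det_fin_five']
  simp only [Matrix.of_apply, Matrix.cons_val_zero, Matrix.cons_val_one, Matrix.cons_val_two,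
    Matrix.cons_val_three, Matrix.cons_val_four, Matrix.head_cons, Matrix.tail_cons,
    Matrix.head_fin_const]


private theorem scalar_key {R : Type*} [CommRing R] (x0 x1 x2 x3 x4 x5 x6 x7 x8 : R) :
    (x0*x1*x2*(x3^3+x4^3+x5^3-x6^3-x7^3-x8^3) + x3*x4*x5*(-x0^3-x1^3-x2^3+x6^3+x7^3+x8^3) + x6*x7*x8*(x0^3+x1^3+x2^3-x3^3-x4^3-x5^3))^2
    = (-(x3*x7)) * (!![x0^2, x1^2, x2^2, x3^2, x7^2;
         x1*x2, x0*x2, x0*x1, x4*x5, x6*x8;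
         x3*x6, x4*x7, x5*x8, x0*x6, x1*x4;
         x4*x8, x5*x6, x3*x7, x2*x7, x2*x3;
         x5*x7, x3*x8, x4*x6, x1*x8, x0*x5]).det
    + (-(x4*x8)) * (!![x0^2, x1^2, x2^2, x4^2, x8^2;
         x1*x2, x0*x2, x0*x1, x3*x5, x6*x7;
         x3*x6, x4*x7, x5*x8, x1*x7, x2*x5;
         x4*x8, x5*x6, x3*x7, x0*x8, x0*x4;
         x5*x7, x3*x8, x4*x6, x2*x6, x1*x3]).det
    + (-(x5*x6)) * (!![x0^2, x1^2, x2^2, x5^2, x6^2;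
         x1*x2, x0*x2, x0*x1, x3*x4, x7*x8;
         x3*x6, x4*x7, x5*x8, x2*x8, x0*x3;
         x4*x8, x5*x6, x3*x7, x1*x6, x1*x5;
         x5*x7, x3*x8, x4*x6, x0*x7, x2*x4]).det
    + (-(x0*x8)) * (!![x0^2, x3^2, x4^2, x5^2, x8^2;
         x1*x2, x4*x5, x3*x5, x3*x4, x6*x7;
         x3*x6, x0*x6, x1*x7, x2*x8, x2*x5;
         x4*x8, x2*x7, x0*x8, x1*x6, x0*x4;
         x5*x7, x1*x8, x2*x6, x0*x7, x1*x3]).det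
    + (-(x0*x4)) * (!![x0^2, x4^2, x6^2, x7^2, x8^2;
         x1*x2, x3*x5, x7*x8, x6*x8, x6*x7;
         x3*x6, x1*x7, x0*x3, x1*x4, x2*x5;
         x4*x8, x0*x8, x1*x5, x2*x3, x0*x4;
         x5*x7, x2*x6, x2*x4, x0*x5, x1*x3]).det
    + (-(x1*x6)) * (!![x1^2, x3^2, x4^2, x5^2, x6^2;
         x0*x2, x4*x5, x3*x5, x3*x4, x7*x8;
         x4*x7, x0*x6, x1*x7, x2*x8, x0*x3;
         x5*x6, x2*x7, x0*x8, x1*x6, x1*x5;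
         x3*x8, x1*x8, x2*x6, x0*x7, x2*x4]).det
    + (-(x1*x5)) * (!![x1^2, x5^2, x6^2, x7^2, x8^2;
         x0*x2, x3*x4, x7*x8, x6*x8, x6*x7;
         x4*x7, x2*x8, x0*x3, x1*x4, x2*x5;
         x5*x6, x1*x6, x1*x5, x2*x3, x0*x4;
         x3*x8, x0*x7, x2*x4, x0*x5, x1*x3]).det
    + (-(x2*x7)) * (!![x2^2, x3^2, x4^2, x5^2, x7^2;
         x0*x1, x4*x5, x3*x5, x3*x4, x6*x8;
         x5*x8, x0*x6, x1*x7, x2*x8, x1*x4;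
         x3*x7, x2*x7, x0*x8, x1*x6, x2*x3;
         x4*x6, x1*x8, x2*x6, x0*x7, x0*x5]).det
    + (-(x2*x3)) * (!![x2^2, x3^2, x6^2, x7^2, x8^2;
         x0*x1, x4*x5, x7*x8, x6*x8, x6*x7;
         x5*x8, x0*x6, x0*x3, x1*x4, x2*x5;
         x3*x7, x2*x7, x1*x5, x2*x3, x0*x4;
         x4*x6, x1*x8, x2*x4, x0*x5, x1*x3]).det := by
  simp only [det_fin_five_of]
  ring


private noncomputable def CSK (K : Type*) [Field K] : Matrix (Fin 5) (Fin 9) (MvPolynomial (Fin 9) K) :=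
  !![(X 0)^2, (X 1)^2, (X 2)^2, (X 3)^2, (X 4)^2, (X 5)^2, (X 6)^2, (X 7)^2, (X 8)^2;
     X 1*X 2, X 0*X 2, X 0*X 1, X 4*X 5, X 3*X 5, X 3*X 4, X 7*X 8, X 6*X 8, X 6*X 7;
     X 3*X 6, X 4*X 7, X 5*X 8, X 0*X 6, X 1*X 7, X 2*X 8, X 0*X 3, X 1*X 4, X 2*X 5;
     X 4*X 8, X 5*X 6, X 3*X 7, X 2*X 7, X 0*X 8, X 1*X 6, X 1*X 5, X 2*X 3, X 0*X 4;
     X 5*X 7, X 3*X 8, X 4*X 6, X 1*X 8, X 2*X 6, X 0*X 7, X 2*X 4, X 0*X 5, X 1*X 3]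

private noncomputable def GK (K : Type*) [Field K] : MvPolynomial (Fin 9) K :=
  X 0*X 1*X 2*(X 3^3+X 4^3+X 5^3-X 6^3-X 7^3-X 8^3) + X 3*X 4*X 5*(-X 0^3-X 1^3-X 2^3+X 6^3+X 7^3+X 8^3) + X 6*X 7*X 8*(X 0^3+X 1^3+X 2^3-X 3^3-X 4^3-X 5^3)

private theorem e0 {K : Type*} [Field K] : ((CSK K).submatrix id ![0,1,2,3,7]) =
    !![X 0^2, X 1^2, X 2^2, X 3^2, X 7^2;
       X 1*X 2, X 0*X 2, X 0*X 1, X 4*X 5, X 6*X 8;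
       X 3*X 6, X 4*X 7, X 5*X 8, X 0*X 6, X 1*X 4;
       X 4*X 8, X 5*X 6, X 3*X 7, X 2*X 7, X 2*X 3;
       X 5*X 7, X 3*X 8, X 4*X 6, X 1*X 8, X 0*X 5] := by
  ext i j; fin_cases i <;> fin_cases j <;> rfl

private theorem e1 {K : Type*} [Field K] : ((CSK K).submatrix id ![0,1,2,4,8]) =
    !![X 0^2, X 1^2, X 2^2, X 4^2, X 8^2;
       X 1*X 2, X 0*X 2, X 0*X 1, X 3*X 5, X 6*X 7;
       X 3*X 6, X 4*X 7, X 5*X 8, X 1*X 7, X 2*X 5;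
       X 4*X 8, X 5*X 6, X 3*X 7, X 0*X 8, X 0*X 4;
       X 5*X 7, X 3*X 8, X 4*X 6, X 2*X 6, X 1*X 3] := by
  ext i j; fin_cases i <;> fin_cases j <;> rfl

private theorem e2 {K : Type*} [Field K] : ((CSK K).submatrix id ![0,1,2,5,6]) =
    !![X 0^2, X 1^2, X 2^2, X 5^2, X 6^2;
       X 1*X 2, X 0*X 2, X 0*X 1, X 3*X 4, X 7*X 8;
       X 3*X 6, X 4*X 7, X 5*X 8, X 2*X 8, X 0*X 3;
       X 4*X 8, X 5*X 6, X 3*X 7, X 1*X 6, X 1*X 5;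
       X 5*X 7, X 3*X 8, X 4*X 6, X 0*X 7, X 2*X 4] := by
  ext i j; fin_cases i <;> fin_cases j <;> rfl

private theorem e3 {K : Type*} [Field K] : ((CSK K).submatrix id ![0,3,4,5,8]) =
    !![X 0^2, X 3^2, X 4^2, X 5^2, X 8^2;
       X 1*X 2, X 4*X 5, X 3*X 5, X 3*X 4, X 6*X 7;
       X 3*X 6, X 0*X 6, X 1*X 7, X 2*X 8, X 2*X 5;
       X 4*X 8, X 2*X 7, X 0*X 8, X 1*X 6, X 0*X 4;
       X 5*X 7, X 1*X 8, X 2*X 6, X 0*X 7, X 1*X 3] := by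
  ext i j; fin_cases i <;> fin_cases j <;> rfl

private theorem e4 {K : Type*} [Field K] : ((CSK K).submatrix id ![0,4,6,7,8]) =
    !![X 0^2, X 4^2, X 6^2, X 7^2, X 8^2;
       X 1*X 2, X 3*X 5, X 7*X 8, X 6*X 8, X 6*X 7;
       X 3*X 6, X 1*X 7, X 0*X 3, X 1*X 4, X 2*X 5;
       X 4*X 8, X 0*X 8, X 1*X 5, X 2*X 3, X 0*X 4;
       X 5*X 7, X 2*X 6, X 2*X 4, X 0*X 5, X 1*X 3] := by
  ext i j; fin_cases i <;> fin_cases j <;> rfl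

private theorem e5 {K : Type*} [Field K] : ((CSK K).submatrix id ![1,3,4,5,6]) =
    !![X 1^2, X 3^2, X 4^2, X 5^2, X 6^2;
       X 0*X 2, X 4*X 5, X 3*X 5, X 3*X 4, X 7*X 8;
       X 4*X 7, X 0*X 6, X 1*X 7, X 2*X 8, X 0*X 3;
       X 5*X 6, X 2*X 7, X 0*X 8, X 1*X 6, X 1*X 5;
       X 3*X 8, X 1*X 8, X 2*X 6, X 0*X 7, X 2*X 4] := by
  ext i j; fin_cases i <;> fin_cases j <;> rfl

private theorem e6 {K : Type*} [Field K] : ((CSK K).submatrix id ![1,5,6,7,8]) =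
    !![X 1^2, X 5^2, X 6^2, X 7^2, X 8^2;
       X 0*X 2, X 3*X 4, X 7*X 8, X 6*X 8, X 6*X 7;
       X 4*X 7, X 2*X 8, X 0*X 3, X 1*X 4, X 2*X 5;
       X 5*X 6, X 1*X 6, X 1*X 5, X 2*X 3, X 0*X 4;
       X 3*X 8, X 0*X 7, X 2*X 4, X 0*X 5, X 1*X 3] := by
  ext i j; fin_cases i <;> fin_cases j <;> rfl

private theorem e7 {K : Type*} [Field K] : ((CSK K).submatrix id ![2,3,4,5,7]) =
    !![X 2^2, X 3^2, X 4^2, X 5^2, X 7^2;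
       X 0*X 1, X 4*X 5, X 3*X 5, X 3*X 4, X 6*X 8;
       X 5*X 8, X 0*X 6, X 1*X 7, X 2*X 8, X 1*X 4;
       X 3*X 7, X 2*X 7, X 0*X 8, X 1*X 6, X 2*X 3;
       X 4*X 6, X 1*X 8, X 2*X 6, X 0*X 7, X 0*X 5] := by
  ext i j; fin_cases i <;> fin_cases j <;> rfl

private theorem e8 {K : Type*} [Field K] : ((CSK K).submatrix id ![2,3,6,7,8]) =
    !![X 2^2, X 3^2, X 6^2, X 7^2, X 8^2;
       X 0*X 1, X 4*X 5, X 7*X 8, X 6*X 8, X 6*X 7;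
       X 5*X 8, X 0*X 6, X 0*X 3, X 1*X 4, X 2*X 5;
       X 3*X 7, X 2*X 7, X 1*X 5, X 2*X 3, X 0*X 4;
       X 4*X 6, X 1*X 8, X 2*X 4, X 0*X 5, X 1*X 3] := by
  ext i j; fin_cases i <;> fin_cases j <;> rfl

private theorem key19 {K : Type*} [Field K] : (GK K)^2 = (-(X 3*X 7)) * ((CSK K).submatrix id ![0,1,2,3,7]).det
      + (-(X 4*X 8)) * ((CSK K).submatrix id ![0,1,2,4,8]).det
      + (-(X 5*X 6)) * ((CSK K).submatrix id ![0,1,2,5,6]).det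
      + (-(X 0*X 8)) * ((CSK K).submatrix id ![0,3,4,5,8]).det
      + (-(X 0*X 4)) * ((CSK K).submatrix id ![0,4,6,7,8]).det
      + (-(X 1*X 6)) * ((CSK K).submatrix id ![1,3,4,5,6]).det
      + (-(X 1*X 5)) * ((CSK K).submatrix id ![1,5,6,7,8]).det
      + (-(X 2*X 7)) * ((CSK K).submatrix id ![2,3,4,5,7]).det
      + (-(X 2*X 3)) * ((CSK K).submatrix id ![2,3,6,7,8]).det := by
  rw [e0, e1, e2, e3, e4, e5, e6, e7, e8]
  exact scalar_key (X 0) (X 1) (X 2) (X 3) (X 4) (X 5) (X 6) (X 7) (X 8)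

private theorem aux19 {K : Type*} [Field K] : (GK K)^2 ∈ Ideal.span {d : MvPolynomial (Fin 9) K |
    ∃ g : Fin 5 → Fin 9, d = ((CSK K).submatrix id g).det} := by
  have h : ∀ g : Fin 5 → Fin 9, ((CSK K).submatrix id g).det ∈ Ideal.span {d : MvPolynomial (Fin 9) K | ∃ g : Fin 5 → Fin 9, d = ((CSK K).submatrix id g).det} := fun g => Ideal.subset_span ⟨g, rfl⟩
  rw [key19]
  exact Ideal.add_mem _ (Ideal.add_mem _ (Ideal.add_mem _ (Ideal.add_mem _ (Ideal.add_mem _ (Ideal.add_mem _ (Ideal.add_mem _ (Ideal.add_mem _ (Ideal.mul_mem_left _ _ (h ![0,1,2,3,7])) (Ideal.mul_mem_left _ _ (h ![0,1,2,4,8]))) (Ideal.mul_mem_left _ _ (h ![0,1,2,5,6]))) (Ideal.mul_mem_left _ _ (h ![0,3,4,5,8]))) (Ideal.mul_mem_left _ _ (h ![0,4,6,7,8]))) (Ideal.mul_mem_left _ _ (h ![1,3,4,5,6]))) (Ideal.mul_mem_left _ _ (h ![1,5,6,7,8]))) (Ideal.mul_mem_left _ _ (h ![2,3,4,5,7])))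 (Ideal.mul_mem_left _ _ (h ![2,3,6,7,8]))

/-- The square of the quartic `G` lies in the ideal generated by the maximal (5×5)
minors of `CS(z)` in `K[z₁,…,z₉]`. -/
theorem stmt19 {K : Type*} [Field K] (h2 : (2 : K) ≠ 0) (h3 : (3 : K) ≠ 0) :
    let z : Fin 9 → MvPolynomial (Fin 9) K := fun i => X i
    let CS : Matrix (Fin 5) (Fin 9) (MvPolynomial (Fin 9) K) :=
      !![(z 0)^2, (z 1)^2, (z 2)^2, (z 3)^2, (z 4)^2, (z 5)^2, (z 6)^2, (z 7)^2, (z 8)^2;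
         z 1*z 2, z 0*z 2, z 0*z 1, z 4*z 5, z 3*z 5, z 3*z 4, z 7*z 8, z 6*z 8, z 6*z 7;
         z 3*z 6, z 4*z 7, z 5*z 8, z 0*z 6, z 1*z 7, z 2*z 8, z 0*z 3, z 1*z 4, z 2*z 5;
         z 4*z 8, z 5*z 6, z 3*z 7, z 2*z 7, z 0*z 8, z 1*z 6, z 1*z 5, z 2*z 3, z 0*z 4;
         z 5*z 7, z 3*z 8, z 4*z 6, z 1*z 8, z 2*z 6, z 0*z 7, z 2*z 4, z 0*z 5, z 1*z 3]
    let G : MvPolynomial (Fin 9) K :=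
      z 0*z 1*z 2*((z 3)^3+(z 4)^3+(z 5)^3-(z 6)^3-(z 7)^3-(z 8)^3)
      + z 3*z 4*z 5*(-(z 0)^3-(z 1)^3-(z 2)^3+(z 6)^3+(z 7)^3+(z 8)^3)
      + z 6*z 7*z 8*((z 0)^3+(z 1)^3+(z 2)^3-(z 3)^3-(z 4)^3-(z 5)^3)
    G^2 ∈ Ideal.span {d : MvPolynomial (Fin 9) K |
      ∃ g : Fin 5 → Fin 9, d = (CS.submatrix id g).det} := by
  intro z CS G
  exact aux19
end
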